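/- arXiv:1706.09298 — 6 statements merged into one kernel-verified Lean document; each statement's English description precedes it below -/
import Mathlib

section
/- Let (λ_k)_{k≥1} be a positive strictly decreasing sequence tending to 0 and (a_k)_{k≥1} positive reals with ∑ a_k λ_k < ∞. Then the function g(μ) = ∑_{k=1}^∞ a_k λ_k/(λ_k − μ), defined for μ ∈ (λ_{n+1}, λ_n), is continuous on each such interval, tends to −∞ as μ ↘ λ_{n+1} and to +∞ as μ ↗ λ_n, and hence has at least one zero in each interval (λ_{n+1}, λ_n). -/
open Real Filter Topology

set_option maxHeartbeats 1000000 in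
theorem bridge_eq_root_in_each_interval
    (lam a : ℕ → ℝ)
    (hpos : ∀ k, 0 < lam k)
    (hdec : StrictAnti lam)
    (hlim : Tendsto lam atTop (nhds 0))
    (hapos : ∀ k, 0 < a k)
    (hsum : Summable (fun k => a k * lam k))
    (g : ℝ → ℝ)
    (hg : ∀ μ, g μ = ∑' k, a k * lam k / (lam k - μ))
    (n : ℕ) :
    ContinuousOn g (Set.Ioo (lam (n+1)) (lam n)) ∧
    Tendsto g (nhdsWithin (lam (n+1)) (Set.Ioi (lam (n+1)))) atBot ∧
    Tendsto g (nhdsWithin (lam n) (Set.Iio (lam n))) atTop ∧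
    ∃ μ ∈ Set.Ioo (lam (n+1)) (lam n), g μ = 0 := by
  have hlt : lam (n+1) < lam n := hdec (Nat.lt_succ_self n)
  have hnum : ∀ k, 0 < a k * lam k := fun k => mul_pos (hapos k) (hpos k)
  have hkub : ∀ k ≤ n, lam n ≤ lam k := fun k hk => hdec.antitone hk
  have htail_le : ∀ m k, lam (k + m) ≤ lam m := fun m k => hdec.antitone (Nat.le_add_left m k)
  -- summability of the series for μ > lam (n+1)
  have hS : ∀ μ : ℝ, lam (n+1) < μ → Summable (fun k => a k * lam k / (lam k - μ)) := by
    intro μ hμ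
    rw [← summable_nat_add_iff (n+1)]
    apply Summable.of_abs
    apply Summable.of_nonneg_of_le (fun k => abs_nonneg _) ?_
      (((summable_nat_add_iff (n+1)).2 hsum).div_const (μ - lam (n+1)))
    intro k
    have hlk : lam (k + (n+1)) ≤ lam (n+1) := htail_le (n+1) k
    have hd : lam (k + (n+1)) - μ < 0 := by linarith
    rw [abs_div, abs_of_pos (hnum _), abs_of_neg hd, neg_sub]
    have hn0 := (hnum (k+(n+1))).le
    gcongr <;> linarith
  -- continuity
  have hcont : ContinuousOn g (Set.Ioo (lam (n+1)) (lam n)) := by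
    intro μ₀ hμ₀
    obtain ⟨h1, h2⟩ := hμ₀
    set c : ℝ := (lam (n+1) + μ₀)/2 with hc
    have hc1 : lam (n+1) < c := by rw [hc]; linarith
    have hc2 : c < μ₀ := by rw [hc]; linarith
    set G : ℝ → ℝ := fun μ =>
      (∑ k ∈ Finset.range (n+1), a k * lam k / (lam k - μ)) +
        ∑' k, a (k+(n+1)) * lam (k+(n+1)) / (lam (k+(n+1)) - μ) with hGdef
    have hG : ContinuousOn G (Set.Ioo c (lam n)) := by
      apply ContinuousOn.add
      · apply continuousOn_finset_sum
        intro k hk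
        have hk' : k ≤ n := Nat.lt_succ_iff.mp (Finset.mem_range.mp hk)
        apply ContinuousOn.div continuousOn_const (continuousOn_const.sub continuousOn_id)
        intro μ hμ
        have hμk : μ < lam k := lt_of_lt_of_le hμ.2 (hkub k hk')
        simpa using sub_ne_zero.mpr (ne_of_gt hμk)
      · apply continuousOn_tsum
          (u := fun k => a (k+(n+1)) * lam (k+(n+1)) / (c - lam (n+1)))
        · intro k
          apply ContinuousOn.div continuousOn_const (continuousOn_const.sub continuousOn_id)
          intro μ hμ
          have h3 : lam (k+(n+1)) < μ := lt_of_le_of_lt (htail_le (n+1) k) (hc1.trans hμ.1)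
          simpa using sub_ne_zero.mpr (ne_of_lt h3)
        · exact ((summable_nat_add_iff (n+1)).2 hsum).div_const _
        · intro k μ hμ
          have h3 : lam (k+(n+1)) ≤ lam (n+1) := htail_le (n+1) k
          have h4 : c < μ := hμ.1
          rw [Real.norm_eq_abs, abs_div, abs_of_pos (hnum _),
            abs_of_neg (by linarith : lam (k+(n+1)) - μ < 0), neg_sub]
          have hn0 := (hnum (k+(n+1))).le
          gcongr <;> linarith
    have hopen : Set.Ioo c (lam n) ∈ 𝓝 μ₀ := isOpen_Ioo.mem_nhds ⟨hc2, h2⟩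
    have hGAt : ContinuousAt G μ₀ := hG.continuousAt hopen
    have heq : G =ᶠ[𝓝 μ₀] g := by
      filter_upwards [isOpen_Ioo.mem_nhds (⟨h1, h2⟩ : μ₀ ∈ Set.Ioo (lam (n+1)) (lam n))] with μ hμ
      rw [hg, hGdef]
      exact Summable.sum_add_tsum_nat_add (n+1) (hS μ hμ.1)
    exact (hGAt.congr heq).continuousWithinAt
  -- midpoint
  set c₀ : ℝ := (lam (n+1) + lam n)/2 with hc₀
  have hc₀1 : lam (n+1) < c₀ := by rw [hc₀]; linarith
  have hc₀2 : c₀ < lam n := by rw [hc₀]; linarith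
  -- limit at the left endpoint : atBot
  have hBot : Tendsto g (𝓝[>] (lam (n+1))) atBot := by
    have h0 : Tendsto (fun μ => μ - lam (n+1)) (𝓝[>] (lam (n+1))) (𝓝[>] (0:ℝ)) := by
      apply tendsto_nhdsWithin_of_tendsto_nhds_of_eventually_within
      · have h : Tendsto (fun μ : ℝ => μ - lam (n+1)) (𝓝 (lam (n+1)))
            (𝓝 (lam (n+1) - lam (n+1))) := tendsto_id.sub tendsto_const_nhds
        rw [sub_self] at h
        exact h.mono_left nhdsWithin_le_nhds
      · filter_upwards [self_mem_nhdsWithin] with μ hμ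
        exact sub_pos.mpr (Set.mem_Ioi.mp hμ)
    have h1' : Tendsto (fun μ => (a (n+1) * lam (n+1)) * (μ - lam (n+1))⁻¹)
        (𝓝[>] (lam (n+1))) atTop :=
      (h0.inv_tendsto_nhdsGT_zero).const_mul_atTop (hnum (n+1))
    have h2' : Tendsto (fun μ => a (n+1) * lam (n+1) / (lam (n+1) - μ))
        (𝓝[>] (lam (n+1))) atBot := by
      have := tendsto_neg_atTop_atBot.comp h1'
      refine this.congr (fun μ => ?_)
      simp only [Function.comp]
      rw [div_eq_mul_inv, ← mul_neg, ← inv_neg, neg_sub]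
    have hb : Tendsto (fun μ => (∑ k ∈ Finset.range (n+1), a k * lam k / (lam k - c₀)) +
        a (n+1) * lam (n+1) / (lam (n+1) - μ)) (𝓝[>] (lam (n+1))) atBot :=
      tendsto_atBot_add_const_left _ _ h2'
    apply tendsto_atBot_mono' _ ?_ hb
    filter_upwards [Ioo_mem_nhdsGT_of_mem (⟨le_refl _, hc₀1⟩ : lam (n+1) ∈ Set.Ico (lam (n+1)) c₀)]
      with μ hμ
    have hSμ := hS μ hμ.1
    have hsplit : g μ = (∑ k ∈ Finset.range (n+2), a k * lam k / (lam k - μ)) +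
        ∑' k, a (k+(n+2)) * lam (k+(n+2)) / (lam (k+(n+2)) - μ) := by
      rw [hg]; exact (Summable.sum_add_tsum_nat_add (n+2) hSμ).symm
    have htail : (∑' k, a (k+(n+2)) * lam (k+(n+2)) / (lam (k+(n+2)) - μ)) ≤ 0 := by
      apply tsum_nonpos
      intro k
      have h3 : lam (k+(n+2)) ≤ lam (n+2) := htail_le (n+2) k
      have h4 : lam (n+2) < lam (n+1) := hdec (Nat.lt_succ_self (n+1))
      have h5 : lam (k+(n+2)) - μ < 0 := by have := hμ.1; linarith
      exact div_nonpos_iff.mpr (Or.inl ⟨(hnum _).le, h5.le⟩)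
    have hhead : (∑ k ∈ Finset.range (n+1), a k * lam k / (lam k - μ)) ≤
        ∑ k ∈ Finset.range (n+1), a k * lam k / (lam k - c₀) := by
      apply Finset.sum_le_sum
      intro k hk
      have hk' : k ≤ n := Nat.lt_succ_iff.mp (Finset.mem_range.mp hk)
      have h5 : lam n ≤ lam k := hkub k hk'
      have h6 : μ < c₀ := hμ.2
      have hn0 := (hnum k).le
      gcongr <;> linarith
    rw [hsplit, Finset.sum_range_succ]
    linarith
  -- limit at the right endpoint : atTop
  have hTop : Tendsto g (𝓝[<] (lam n)) atTop := by
    have h0 : Tendsto (fun μ => lam n - μ) (𝓝[<] (lam n)) (𝓝[>] (0:ℝ)) := by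
      apply tendsto_nhdsWithin_of_tendsto_nhds_of_eventually_within
      · have h : Tendsto (fun μ : ℝ => lam n - μ) (𝓝 (lam n))
            (𝓝 (lam n - lam n)) := tendsto_const_nhds.sub tendsto_id
        rw [sub_self] at h
        exact h.mono_left nhdsWithin_le_nhds
      · filter_upwards [self_mem_nhdsWithin] with μ hμ
        exact sub_pos.mpr (Set.mem_Iio.mp hμ)
    have h1' : Tendsto (fun μ => (a n * lam n) * (lam n - μ)⁻¹) (𝓝[<] (lam n)) atTop :=
      (h0.inv_tendsto_nhdsGT_zero).const_mul_atTop (hnum n)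
    have h2' : Tendsto (fun μ => a n * lam n / (lam n - μ)) (𝓝[<] (lam n)) atTop := by
      refine h1'.congr (fun μ => ?_)
      rw [div_eq_mul_inv]
    have hb : Tendsto (fun μ => a n * lam n / (lam n - μ) -
        ∑' k, a (k+(n+1)) * lam (k+(n+1)) / (c₀ - lam (n+1))) (𝓝[<] (lam n)) atTop :=
      tendsto_atTop_add_const_right _ _ h2'
    apply tendsto_atTop_mono' _ ?_ hb
    filter_upwards [Ioo_mem_nhdsLT_of_mem (⟨hc₀2, le_refl _⟩ : lam n ∈ Set.Ioc c₀ (lam n))]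
      with μ hμ
    have hμ1 : lam (n+1) < μ := lt_trans hc₀1 hμ.1
    have hSμ := hS μ hμ1
    have hSμtail : Summable (fun k => a (k+(n+1)) * lam (k+(n+1)) / (lam (k+(n+1)) - μ)) :=
      (summable_nat_add_iff (n+1)).2 hSμ
    have hu : Summable (fun k => a (k+(n+1)) * lam (k+(n+1)) / (c₀ - lam (n+1))) :=
      ((summable_nat_add_iff (n+1)).2 hsum).div_const _
    have hsplit : g μ = (∑ k ∈ Finset.range (n+1), a k * lam k / (lam k - μ)) +
        ∑' k, a (k+(n+1)) * lam (k+(n+1)) / (lam (k+(n+1)) - μ) := by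
      rw [hg]; exact (Summable.sum_add_tsum_nat_add (n+1) hSμ).symm
    have htail : -(∑' k, a (k+(n+1)) * lam (k+(n+1)) / (c₀ - lam (n+1))) ≤
        ∑' k, a (k+(n+1)) * lam (k+(n+1)) / (lam (k+(n+1)) - μ) := by
      rw [← tsum_neg]
      apply Summable.tsum_le_tsum _ hu.neg hSμtail
      intro k
      have h3 : lam (k+(n+1)) ≤ lam (n+1) := htail_le (n+1) k
      have h4 : c₀ < μ := hμ.1
      have h6 : a (k+(n+1)) * lam (k+(n+1)) / (μ - lam (k+(n+1))) ≤
          a (k+(n+1)) * lam (k+(n+1)) / (c₀ - lam (n+1)) := by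
        have hn0 := (hnum (k+(n+1))).le
        gcongr <;> linarith
      have h7 : a (k+(n+1)) * lam (k+(n+1)) / (lam (k+(n+1)) - μ) =
          -(a (k+(n+1)) * lam (k+(n+1)) / (μ - lam (k+(n+1)))) := by
        rw [← neg_sub μ (lam (k+(n+1))), div_neg]
      rw [h7]
      exact neg_le_neg h6
    have hhead : a n * lam n / (lam n - μ) ≤
        ∑ k ∈ Finset.range (n+1), a k * lam k / (lam k - μ) := by
      apply Finset.single_le_sum (f := fun k => a k * lam k / (lam k - μ))
      · intro k hk
        have hk' : k ≤ n := Nat.lt_succ_iff.mp (Finset.mem_range.mp hk)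
        have h5 : μ < lam k := lt_of_lt_of_le hμ.2 (hkub k hk')
        exact (div_pos (hnum _) (by linarith)).le
      · exact Finset.self_mem_range_succ n
    rw [hsplit]
    linarith
  refine ⟨hcont, hBot, hTop, ?_⟩
  -- find points where g is negative / positive
  have ev1 : ∀ᶠ μ in 𝓝[>] (lam (n+1)), μ ∈ Set.Ioo (lam (n+1)) c₀ :=
    Ioo_mem_nhdsGT_of_mem (⟨le_refl _, hc₀1⟩ : lam (n+1) ∈ Set.Ico (lam (n+1)) c₀)
  have ev2 : ∀ᶠ μ in 𝓝[<] (lam n), μ ∈ Set.Ioo c₀ (lam n) :=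
    Ioo_mem_nhdsLT_of_mem (⟨hc₀2, le_refl _⟩ : lam n ∈ Set.Ioc c₀ (lam n))
  obtain ⟨μ₁, hμ₁mem, hμ₁neg⟩ :=
    (ev1.and (hBot.eventually (eventually_lt_atBot (0:ℝ)))).exists
  obtain ⟨μ₂, hμ₂mem, hμ₂pos⟩ :=
    (ev2.and (hTop.eventually (eventually_gt_atTop (0:ℝ)))).exists
  have hμ₁₂ : μ₁ ≤ μ₂ := le_of_lt (lt_trans hμ₁mem.2 hμ₂mem.1)
  have hsub : Set.Icc μ₁ μ₂ ⊆ Set.Ioo (lam (n+1)) (lam n) := fun x hx =>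
    ⟨lt_of_lt_of_le hμ₁mem.1 hx.1, lt_of_le_of_lt hx.2 hμ₂mem.2⟩
  have him := intermediate_value_Icc hμ₁₂ (hcont.mono hsub)
  obtain ⟨μ, hμmem, hμ0⟩ := him ⟨le_of_lt hμ₁neg, le_of_lt hμ₂pos⟩
  exact ⟨μ, hsub hμmem, hμ0⟩
end

section
/- For H ∈ (1/2, 1), the real part of (1/i)∫₀^∞ dτ/((iτ)^{2H+1} − 1) (principal branch of the power) equals (π/(2H+1)) · ℓ_H, where ℓ_H = sin((π/2)·(H−1/2)/(H+1/2)) / sin((π/2)·1/(H+1/2)). -/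
open Real MeasureTheory Complex Set Filter


lemma intOn_rpow_div (s c : ℝ) (hs0 : 0 < s) (hs1 : s < 1) (hc : 0 < c) (n : ℕ) (hn : 1 ≤ n) :
    IntegrableOn (fun u : ℝ => u ^ (s - 1) * ((u + c) ^ n)⁻¹) (Ioi 0) := by
  have hmeas : Measurable (fun u : ℝ => u ^ (s - 1) * ((u + c) ^ n)⁻¹) := by fun_prop
  rw [← Ioc_union_Ioi_eq_Ioi (zero_le_one' ℝ)]
  refine IntegrableOn.union ?_ ?_
  · have hint : IntegrableOn (fun u : ℝ => u ^ (s - 1) * (c ^ n)⁻¹) (Ioc 0 1) := by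
      refine Integrable.mul_const ?_ _
      have h := (intervalIntegral.intervalIntegrable_rpow' (a := 0) (b := 1)
        (show (-1:ℝ) < s - 1 by linarith)).1
      exact h
    refine hint.mono' hmeas.aestronglyMeasurable ?_
    filter_upwards [ae_restrict_mem measurableSet_Ioc] with u hu
    have hu0 : 0 < u := hu.1
    rw [norm_mul, norm_inv]
    have h1 : ‖u ^ (s - 1)‖ = u ^ (s - 1) := by
      rw [Real.norm_eq_abs, _root_.abs_of_nonneg (rpow_nonneg hu0.le _)]
    rw [h1]
    have h2 : (c:ℝ) ^ n ≤ (u + c) ^ n := by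
      exact pow_le_pow_left₀ hc.le (by linarith) n
    have h3 : ‖(u + c) ^ n‖⁻¹ ≤ ((c:ℝ) ^ n)⁻¹ := by
      rw [Real.norm_eq_abs, _root_.abs_of_nonneg (by positivity)]
      exact inv_anti₀ (by positivity) h2
    exact mul_le_mul_of_nonneg_left h3 (rpow_nonneg hu0.le _)
  · have hint : IntegrableOn (fun u : ℝ => u ^ (s - 1 - n)) (Ioi 1) :=
      integrableOn_Ioi_rpow_of_lt (by
        have : (1:ℝ) ≤ n := by exact_mod_cast hn
        linarith) one_pos
    refine hint.mono' hmeas.aestronglyMeasurable ?_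
    filter_upwards [ae_restrict_mem measurableSet_Ioi] with u hu
    have hu1 : (1:ℝ) < u := hu
    have hu0 : 0 < u := by linarith
    rw [norm_mul, norm_inv, Real.norm_eq_abs, _root_.abs_of_nonneg (rpow_nonneg hu0.le _),
      Real.norm_eq_abs, _root_.abs_of_nonneg (by positivity)]
    have h2 : (u:ℝ) ^ n ≤ (u + c) ^ n := pow_le_pow_left₀ hu0.le (by linarith) n
    have h3 : ((u + c) ^ n)⁻¹ ≤ ((u:ℝ) ^ n)⁻¹ := inv_anti₀ (by positivity) h2
    calc u ^ (s - 1) * ((u + c) ^ n)⁻¹ ≤ u ^ (s - 1) * ((u:ℝ) ^ n)⁻¹ :=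
          mul_le_mul_of_nonneg_left h3 (rpow_nonneg hu0.le _)
      _ = u ^ (s - 1 - n) := by
          rw [← Real.rpow_natCast u n, ← Real.rpow_neg hu0.le, ← Real.rpow_add hu0]
          ring_nf


lemma abs_add_ge (z : ℂ) (δ u : ℝ) (hz : δ ≤ z.re) (hu : 0 ≤ u) : u + δ ≤ ‖(u:ℂ) + z‖ := by
  have := hu
  calc u + δ ≤ ((u:ℂ) + z).re := by simp only [Complex.add_re, Complex.ofReal_re]; linarith
    _ ≤ ‖(u:ℂ) + z‖ := Complex.re_le_norm _
    _ = ‖(u:ℂ) + z‖ := rfl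

lemma F_int (s : ℝ) (hs0 : 0 < s) (hs1 : s < 1) (z : ℂ) (hz : 0 < z.re) :
    IntegrableOn (fun u : ℝ => (↑(u ^ (s-1)) * ((u:ℂ) + z)⁻¹ : ℂ)) (Ioi 0) := by
  have hbd := intOn_rpow_div s z.re hs0 hs1 hz 1 le_rfl
  refine hbd.mono' ?_ ?_
  · apply Measurable.aestronglyMeasurable
    fun_prop
  · filter_upwards [ae_restrict_mem measurableSet_Ioi] with u hu
    have hu0 : (0:ℝ) < u := hu
    rw [norm_mul, Complex.norm_real, Real.norm_eq_abs,
      _root_.abs_of_nonneg (rpow_nonneg hu0.le _), norm_inv, pow_one]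
    refine mul_le_mul_of_nonneg_left ?_ (rpow_nonneg hu0.le _)
    have h1 : u + z.re ≤ ‖(u:ℂ) + z‖ := abs_add_ge z z.re u le_rfl hu0.le
    exact inv_anti₀ (by linarith) h1
lemma K_one (s : ℝ) (hs0 : 0 < s) (hs1 : s < 1) :
    ∫ u in Ioi (0:ℝ), (↑(u ^ (s-1)) * ((u:ℂ) + 1)⁻¹ : ℂ) = ↑(π / Real.sin (π * s)) := by
  have hβ : Complex.betaIntegral (s:ℂ) (1 - s) = ↑(π / Real.sin (π * s)) := by
    have h := Complex.Gamma_mul_Gamma_eq_betaIntegral (s := (s:ℂ)) (t := 1 - s)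
      (by simpa using hs0)
      (by simp only [Complex.sub_re, Complex.one_re, Complex.ofReal_re]; linarith)
    rw [show (s:ℂ) + (1 - s) = 1 by ring, Complex.Gamma_one, one_mul] at h
    rw [← h, Complex.Gamma_mul_Gamma_one_sub]
    push_cast
    ring
  have hderiv : ∀ u ∈ Ioi (0:ℝ), HasDerivWithinAt (fun u : ℝ => 1 - (1 + u)⁻¹)
      (((1 + u) ^ 2)⁻¹) (Ioi 0) u := by
    intro u hu
    have hu0 : (0:ℝ) < u := hu
    have hP : (0:ℝ) < 1 + u := by linarith
    have h0 : HasDerivAt (fun u : ℝ => 1 + u) 1 u := (hasDerivAt_id u).const_add 1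
    have h1 : HasDerivAt (fun u : ℝ => (1 + u)⁻¹) (-1 / (1 + u) ^ 2) u := by
      exact h0.inv hP.ne'
    have h2 : HasDerivAt (fun u : ℝ => 1 - (1 + u)⁻¹) (((1 + u) ^ 2)⁻¹) u := by
      have := h1.const_sub 1
      have heq : -(-1 / (1 + u) ^ 2) = ((1 + u) ^ 2)⁻¹ := by field_simp
      rwa [heq] at this
    exact h2.hasDerivWithinAt
  have hinj : InjOn (fun u : ℝ => 1 - (1 + u)⁻¹) (Ioi 0) := by
    have : StrictMonoOn (fun u : ℝ => 1 - (1 + u)⁻¹) (Ioi 0) := by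
      intro x hx y hy hxy
      have hx0 : (0:ℝ) < x := hx
      have hy0 : (0:ℝ) < y := hy
      have : (1 + y)⁻¹ < (1 + x)⁻¹ := inv_strictAnti₀ (by linarith) (by linarith)
      simp only
      linarith
    exact this.injOn
  have himg : (fun u : ℝ => 1 - (1 + u)⁻¹) '' (Ioi 0) = Ioo 0 1 := by
    ext y
    constructor
    · rintro ⟨u, hu, rfl⟩
      have hu0 : (0:ℝ) < u := hu
      have hP : (0:ℝ) < 1 + u := by linarith
      have h1 : (1 + u)⁻¹ < 1 := by rw [inv_lt_one_iff₀]; right; linarith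
      have h2 : 0 < (1 + u)⁻¹ := by positivity
      exact ⟨by simp only; linarith, by simp only; linarith⟩
    · rintro ⟨hy0, hy1⟩
      have h1 : (0:ℝ) < 1 - y := by linarith
      refine ⟨y / (1 - y), mem_Ioi.mpr (div_pos hy0 h1), ?_⟩
      simp only
      have h2 : 1 + y / (1 - y) = (1 - y)⁻¹ := by field_simp; ring
      rw [h2, inv_inv]; ring
  have hcov := integral_image_eq_integral_abs_deriv_smul measurableSet_Ioi hderiv hinj
    (fun t => (t:ℂ) ^ ((s:ℂ) - 1) * (1 - (t:ℂ)) ^ (-(s:ℂ)))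
  rw [himg] at hcov
  have hL : (∫ t in Ioo (0:ℝ) 1, (t:ℂ) ^ ((s:ℂ) - 1) * (1 - (t:ℂ)) ^ (-(s:ℂ)))
      = Complex.betaIntegral (s:ℂ) (1 - s) := by
    rw [Complex.betaIntegral, intervalIntegral.integral_of_le zero_le_one,
      ← integral_Ioc_eq_integral_Ioo]
    refine setIntegral_congr_fun measurableSet_Ioc ?_
    intro t _
    norm_num
  have hR : ∀ u ∈ Ioi (0:ℝ), |((1 + u) ^ 2)⁻¹| •
      ((((1 - (1 + u)⁻¹ : ℝ)):ℂ) ^ ((s:ℂ) - 1) * (1 - ((1 - (1 + u)⁻¹ : ℝ):ℂ)) ^ (-(s:ℂ)))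
      = (↑(u ^ (s-1)) * ((u:ℂ) + 1)⁻¹ : ℂ) := by
    intro u hu
    have hu0 : (0:ℝ) < u := hu
    have hP : (0:ℝ) < 1 + u := by linarith
    have hφu : (1 : ℝ) - (1 + u)⁻¹ = u / (1 + u) := by field_simp; ring
    have hnn1 : (0:ℝ) ≤ u / (1 + u) := by positivity
    have hnn2 : (0:ℝ) ≤ (1 + u)⁻¹ := by positivity
    have e0 : |((1 + u) ^ 2)⁻¹| = ((1 + u) ^ 2)⁻¹ := _root_.abs_of_nonneg (by positivity)
    rw [e0, hφu]
    have hc1 : ((u / (1 + u) : ℝ) : ℂ) ^ ((s:ℂ) - 1) = ↑((u / (1 + u)) ^ (s - 1) : ℝ) := by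
      rw [show ((s:ℂ) - 1) = ((s - 1 : ℝ) : ℂ) by push_cast; ring, ← Complex.ofReal_cpow hnn1]
    have h1φ' : 1 - ((u / (1 + u) : ℝ) : ℂ) = (((1 + u)⁻¹ : ℝ) : ℂ) := by
      have : (1 : ℝ) - u / (1 + u) = (1 + u)⁻¹ := by field_simp; ring
      push_cast [← this]
      ring
    have hc2 : (1 - ((u / (1 + u) : ℝ) : ℂ)) ^ (-(s:ℂ)) = ↑(((1 + u)⁻¹) ^ (-s) : ℝ) := by
      rw [h1φ', show (-(s:ℂ)) = ((-s : ℝ) : ℂ) by push_cast; ring, ← Complex.ofReal_cpow hnn2]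
    rw [hc1, hc2, Complex.real_smul, ← Complex.ofReal_mul, ← Complex.ofReal_mul]
    have key : ((1 + u) ^ 2)⁻¹ * ((u / (1 + u)) ^ (s - 1) * ((1 + u)⁻¹) ^ (-s))
        = u ^ (s - 1) * (u + 1)⁻¹ := by
      have e1 : (u / (1 + u)) ^ (s - 1) = u ^ (s - 1) * (1 + u) ^ (1 - s) := by
        rw [Real.div_rpow hu0.le hP.le, div_eq_mul_inv, ← Real.rpow_neg hP.le, neg_sub]
      have e2 : ((1 + u)⁻¹) ^ (-s) = (1 + u) ^ s := by
        rw [Real.inv_rpow hP.le, Real.rpow_neg hP.le, inv_inv]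
      have e3 : ((1 + u) ^ 2)⁻¹ = (1 + u) ^ (-2 : ℝ) := by
        rw [← Real.rpow_natCast (1 + u) 2, ← Real.rpow_neg hP.le]
        norm_num
      rw [e1, e2, e3]
      calc (1 + u) ^ (-2 : ℝ) * (u ^ (s - 1) * (1 + u) ^ (1 - s) * (1 + u) ^ s)
          = u ^ (s - 1) * ((1 + u) ^ (-2 : ℝ) * (1 + u) ^ (1 - s) * (1 + u) ^ s) := by ring
        _ = u ^ (s - 1) * (1 + u) ^ (-2 + (1 - s) + s : ℝ) := by
            rw [← Real.rpow_add hP, ← Real.rpow_add hP]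
        _ = u ^ (s - 1) * (1 + u) ^ (-1 : ℝ) := by rw [show (-2 + (1 - s) + s : ℝ) = -1 by ring]
        _ = u ^ (s - 1) * (u + 1)⁻¹ := by rw [Real.rpow_neg_one, add_comm]
    rw [key]
    push_cast
    ring
  calc (∫ u in Ioi (0:ℝ), (↑(u ^ (s-1)) * ((u:ℂ) + 1)⁻¹ : ℂ))
      = ∫ u in Ioi (0:ℝ), |((1 + u) ^ 2)⁻¹| •
        ((((1 - (1 + u)⁻¹ : ℝ)):ℂ) ^ ((s:ℂ) - 1) * (1 - ((1 - (1 + u)⁻¹ : ℝ):ℂ)) ^ (-(s:ℂ))) :=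
        setIntegral_congr_fun measurableSet_Ioi (fun u hu => (hR u hu).symm)
    _ = ∫ t in Ioo (0:ℝ) 1, (t:ℂ) ^ ((s:ℂ) - 1) * (1 - (t:ℂ)) ^ (-(s:ℂ)) := by
        exact hcov.symm
    _ = Complex.betaIntegral (s:ℂ) (1 - s) := hL
    _ = ↑(π / Real.sin (π * s)) := hβ
lemma K_real (s : ℝ) (hs0 : 0 < s) (hs1 : s < 1) (x : ℝ) (hx : 0 < x) :
    ∫ u in Ioi (0:ℝ), (↑(u ^ (s-1)) * ((u:ℂ) + x)⁻¹ : ℂ)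
      = ↑(π / Real.sin (π * s)) * ((x:ℂ)) ^ ((s:ℂ) - 1) := by
  have h := integral_comp_mul_left_Ioi (fun u : ℝ => (↑(u ^ (s-1)) * ((u:ℂ) + x)⁻¹ : ℂ)) 0 hx
  simp only [mul_zero] at h
  have hL : (∫ t in Ioi (0:ℝ), (↑((x * t) ^ (s-1)) * (((x * t : ℝ):ℂ) + x)⁻¹ : ℂ))
      = ↑(x ^ (s-1)) * (x:ℂ)⁻¹ * ↑(π / Real.sin (π * s)) := by
    rw [← K_one s hs0 hs1, ← integral_const_mul]
    refine setIntegral_congr_fun measurableSet_Ioi ?_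
    intro t ht
    have ht0 : (0:ℝ) < t := ht
    simp only
    have e1 : (x * t) ^ (s - 1) = x ^ (s - 1) * t ^ (s - 1) := Real.mul_rpow hx.le ht0.le
    have e2 : ((x * t : ℝ):ℂ) + x = (x:ℂ) * ((t:ℂ) + 1) := by push_cast; ring
    rw [e1, e2, mul_inv]
    push_cast
    have hxne : (x:ℂ) ≠ 0 := Complex.ofReal_ne_zero.mpr hx.ne'
    field_simp
  rw [hL] at h
  have hxc : (x:ℂ) ≠ 0 := Complex.ofReal_ne_zero.mpr hx.ne'
  have h2 : (∫ u in Ioi (0:ℝ), (↑(u ^ (s-1)) * ((u:ℂ) + x)⁻¹ : ℂ))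
      = x • (x⁻¹ • ∫ u in Ioi (0:ℝ), (↑(u ^ (s-1)) * ((u:ℂ) + x)⁻¹ : ℂ)) := by
    rw [smul_smul, mul_inv_cancel₀ hx.ne', one_smul]
  rw [← h] at h2
  rw [h2, Complex.real_smul]
  have e3 : ((x ^ (s-1) : ℝ) : ℂ) = (x:ℂ) ^ ((s:ℂ) - 1) := by
    rw [Complex.ofReal_cpow hx.le]
    push_cast
    ring_nf
  rw [show (x:ℂ) * (↑(x ^ (s-1)) * (↑x)⁻¹ * ↑(π / Real.sin (π * s)))
      = (↑x * (↑x)⁻¹) * (↑(π / Real.sin (π * s)) * ↑(x ^ (s-1))) from by ring,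
    mul_inv_cancel₀ hxc, one_mul, e3]
lemma K_hasDeriv (s : ℝ) (hs0 : 0 < s) (hs1 : s < 1) (z₀ : ℂ) (hz : 0 < z₀.re) :
    HasDerivAt (fun z : ℂ => ∫ u in Ioi (0:ℝ), (↑(u ^ (s-1)) * ((u:ℂ) + z)⁻¹ : ℂ))
      (∫ u in Ioi (0:ℝ), (↑(u ^ (s-1)) * (-(((u:ℂ) + z₀) ^ 2)⁻¹) : ℂ)) z₀ := by
  set δ : ℝ := z₀.re / 2 with hδ
  have hδ0 : 0 < δ := by positivity
  have key := hasDerivAt_integral_of_dominated_loc_of_deriv_le (μ := volume.restrict (Ioi 0))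
    (F := fun (z : ℂ) (u : ℝ) => (↑(u ^ (s-1)) * ((u:ℂ) + z)⁻¹ : ℂ))
    (F' := fun (z : ℂ) (u : ℝ) => (↑(u ^ (s-1)) * (-(((u:ℂ) + z) ^ 2)⁻¹) : ℂ))
    (x₀ := z₀) (bound := fun u : ℝ => u ^ (s-1) * ((u + δ) ^ 2)⁻¹)
    (Metric.ball_mem_nhds z₀ hδ0) ?_ ?_ ?_ ?_ ?_ ?_
  · exact key.2
  · filter_upwards with z
    apply Measurable.aestronglyMeasurable
    fun_prop
  · exact F_int s hs0 hs1 z₀ hz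
  · apply Measurable.aestronglyMeasurable
    fun_prop
  · filter_upwards [ae_restrict_mem measurableSet_Ioi] with u hu z hzb
    have hu0 : (0:ℝ) < u := hu
    have hzre : δ ≤ z.re := by
      have h1 : |z.re - z₀.re| ≤ ‖z - z₀‖ := by
        simpa using Complex.abs_re_le_norm (z - z₀)
      have h2 : ‖z - z₀‖ < δ := by simpa [Metric.mem_ball, dist_eq_norm] using hzb
      have := abs_le.mp h1
      simp only [hδ] at *
      linarith [this.1]
    rw [norm_mul, Complex.norm_real, Real.norm_eq_abs,
      _root_.abs_of_nonneg (rpow_nonneg hu0.le _), norm_neg, norm_inv, norm_pow]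
    refine mul_le_mul_of_nonneg_left ?_ (rpow_nonneg hu0.le _)
    have h3 : u + δ ≤ ‖(u:ℂ) + z‖ := abs_add_ge z δ u hzre hu0.le
    have h4 : (u + δ) ^ 2 ≤ ‖(u:ℂ) + z‖ ^ 2 := by
      apply pow_le_pow_left₀ (by positivity) h3
    exact inv_anti₀ (by positivity) h4
  · have := intOn_rpow_div s δ hs0 hs1 hδ0 2 one_le_two
    exact this
  · filter_upwards [ae_restrict_mem measurableSet_Ioi] with u hu z hzb
    have hu0 : (0:ℝ) < u := hu
    have hzre : δ ≤ z.re := by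
      have h1 : |z.re - z₀.re| ≤ ‖z - z₀‖ := by
        simpa using Complex.abs_re_le_norm (z - z₀)
      have h2 : ‖z - z₀‖ < δ := by simpa [Metric.mem_ball, dist_eq_norm] using hzb
      have := abs_le.mp h1
      simp only [hδ] at *
      linarith [this.1]
    have hne : (u:ℂ) + z ≠ 0 := by
      intro hcon
      have : ((u:ℂ) + z).re = 0 := by rw [hcon]; simp
      simp only [Complex.add_re, Complex.ofReal_re] at this
      have : (0:ℝ) < u + z.re := by linarith
      linarith
    have h5 : HasDerivAt (fun z : ℂ => (u:ℂ) + z) 1 z := (hasDerivAt_id z).const_add _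
    have h6 : HasDerivAt (fun z : ℂ => ((u:ℂ) + z)⁻¹) (-(((u:ℂ) + z) ^ 2)⁻¹) z := by
      have h7 := h5.inv hne
      have heq : -1 / ((u:ℂ) + z) ^ 2 = -(((u:ℂ) + z) ^ 2)⁻¹ := by ring
      rw [heq] at h7
      exact h7
    simpa using h6.const_mul ((u ^ (s-1) : ℝ) : ℂ)
lemma K_val (s : ℝ) (hs0 : 0 < s) (hs1 : s < 1) (z : ℂ) (hz : 0 < z.re) :
    ∫ u in Ioi (0:ℝ), (↑(u ^ (s-1)) * ((u:ℂ) + z)⁻¹ : ℂ)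
      = ↑(π / Real.sin (π * s)) * z ^ ((s:ℂ) - 1) := by
  have hUopen : IsOpen {w : ℂ | 0 < w.re} := by
    exact isOpen_lt continuous_const Complex.continuous_re
  have hUconn : IsPreconnected {w : ℂ | 0 < w.re} :=
    (convex_halfSpace_re_gt 0).isPreconnected
  have hf : AnalyticOnNhd ℂ
      (fun z : ℂ => ∫ u in Ioi (0:ℝ), (↑(u ^ (s-1)) * ((u:ℂ) + z)⁻¹ : ℂ)) {w : ℂ | 0 < w.re} := by
    apply DifferentiableOn.analyticOnNhd ?_ hUopen
    intro w hw
    exact ((K_hasDeriv s hs0 hs1 w hw).differentiableAt).differentiableWithinAt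
  have hg : AnalyticOnNhd ℂ
      (fun z : ℂ => (↑(π / Real.sin (π * s)) * z ^ ((s:ℂ) - 1) : ℂ)) {w : ℂ | 0 < w.re} := by
    apply DifferentiableOn.analyticOnNhd ?_ hUopen
    intro w hw
    apply DifferentiableWithinAt.mono (t := {w : ℂ | 0 < w.re}) ?_ le_rfl.subset
    apply DifferentiableAt.differentiableWithinAt
    exact ((differentiableAt_id.cpow (differentiableAt_const _) (Or.inl hw))).const_mul _
  have hfreq : ∃ᶠ w in nhdsWithin (1:ℂ) {(1:ℂ)}ᶜ,
      (∫ u in Ioi (0:ℝ), (↑(u ^ (s-1)) * ((u:ℂ) + w)⁻¹ : ℂ))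
        = ↑(π / Real.sin (π * s)) * w ^ ((s:ℂ) - 1) := by
    have htend : Tendsto (fun n : ℕ => (((1 + 1/(n+1) : ℝ)) : ℂ)) atTop
        (nhdsWithin (1:ℂ) {(1:ℂ)}ᶜ) := by
      apply tendsto_nhdsWithin_of_tendsto_nhds_of_eventually_within
      · have h1 : Tendsto (fun n : ℕ => (1 + 1/(n+1) : ℝ)) atTop (nhds 1) := by
          have := tendsto_one_div_add_atTop_nhds_zero_nat (𝕜 := ℝ)
          have h2 := this.const_add (1:ℝ)
          simpa using h2
        have h3 := (Complex.continuous_ofReal.tendsto (1:ℝ)).comp h1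
        have h4 : (fun n : ℕ => (((1 + 1/(n+1) : ℝ)) : ℂ))
            = Complex.ofReal ∘ (fun n : ℕ => (1 + 1/(n+1) : ℝ)) := rfl
        rw [h4]
        simpa using h3
      · filter_upwards with n
        simp only [Set.mem_compl_iff, Set.mem_singleton_iff]
        intro hcon
        have : (1 + 1/(n+1) : ℝ) = 1 := by exact_mod_cast hcon
        have hpos : (0:ℝ) < 1/(n+1) := by positivity
        linarith
    apply htend.frequently
    apply Filter.Frequently.of_forall
    intro n
    have hx : (0:ℝ) < 1 + 1/(n+1) := by positivity
    exact K_real s hs0 hs1 _ hx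
  have := hf.eqOn_of_preconnected_of_frequently_eq hg hUconn
    (show (1:ℂ) ∈ {w : ℂ | 0 < w.re} by norm_num) hfreq
  exact this hz
theorem real_part_integral (H : ℝ) (hH : H ∈ Set.Ioo (1/2 : ℝ) 1) :
    ((Complex.I)⁻¹ * ∫ τ in Set.Ioi (0:ℝ),
        ((Complex.I * (τ : ℂ)) ^ ((2*H+1 : ℝ) : ℂ) - 1)⁻¹).re =
      (π / (2*H+1)) *
        (Real.sin ((π/2) * (H - 1/2) / (H + 1/2)) / Real.sin ((π/2) * (1 / (H + 1/2)))) := by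
  obtain ⟨hH1, hH2⟩ := hH
  set a : ℝ := 2*H+1 with ha
  have ha2 : 2 < a := by simp only [ha]; linarith
  have ha3 : a < 3 := by simp only [ha]; linarith
  have ha0 : 0 < a := by linarith
  set s : ℝ := a⁻¹ with hs
  have has : a * s = 1 := mul_inv_cancel₀ ha0.ne'
  have hs0 : 0 < s := by positivity
  have hs1 : s < 1 := by
    rw [hs]; rw [inv_lt_one_iff₀]; right; linarith
  set θ : ℝ := π * a / 2 with hθ
  have hπ : 0 < π := Real.pi_pos
  have hθ1 : π < θ := by
    rw [hθ]; nlinarith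
  have hθ2 : θ < 3 * π / 2 := by
    rw [hθ]; nlinarith
  set z : ℂ := -Complex.exp (((-θ : ℝ) : ℂ) * I) with hz
  have hzexp : z = Complex.exp (((π - θ : ℝ) : ℂ) * I) := by
    rw [hz, show (((π - θ : ℝ)) : ℂ) * I = ↑π * I + ((-θ : ℝ) : ℂ) * I by push_cast; ring,
      Complex.exp_add, Complex.exp_pi_mul_I]
    ring
  have hzre : 0 < z.re := by
    rw [hzexp, Complex.exp_ofReal_mul_I_re]
    apply Real.cos_pos_of_mem_Ioo
    rw [Set.mem_Ioo]
    constructor <;> linarith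
  -- pointwise rewriting of the integrand
  have hpt : ∀ τ : ℝ, τ ∈ Ioi (0:ℝ) →
      ((Complex.I * (τ : ℂ)) ^ ((a : ℝ) : ℂ) - 1)⁻¹
        = Complex.exp (((-θ : ℝ) : ℂ) * I) * ((↑(τ ^ a) : ℂ) + z)⁻¹ := by
    intro τ hτ
    have hτ0 : (0:ℝ) < τ := hτ
    have hne : Complex.I * (τ : ℂ) ≠ 0 :=
      mul_ne_zero Complex.I_ne_zero (Complex.ofReal_ne_zero.mpr hτ0.ne')
    have hlog : Complex.log (Complex.I * (τ : ℂ)) = ↑(Real.log τ) + ↑(π/2) * I := by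
      have habs : ‖Complex.I * (τ : ℂ)‖ = τ := by
        simp [_root_.abs_of_pos hτ0]
      have harg : Complex.arg (Complex.I * (τ : ℂ)) = π / 2 := by
        rw [mul_comm, Complex.arg_real_mul _ hτ0, Complex.arg_I]
      apply Complex.ext
      · simp [Complex.log_re, habs]
      · simp [Complex.log_im, harg]
    have hcpow : (Complex.I * (τ : ℂ)) ^ ((a : ℝ) : ℂ) = ↑(τ ^ a) * Complex.exp (↑θ * I) := by
      rw [Complex.cpow_def_of_ne_zero hne, hlog,
        show (↑(Real.log τ) + ↑(π/2) * I) * ((a : ℝ) : ℂ)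
          = ↑(a * Real.log τ) + ↑θ * I by push_cast [hθ]; ring,
        Complex.exp_add]
      congr 1
      rw [← Complex.ofReal_exp]
      congr 1
      rw [Real.rpow_def_of_pos hτ0]
      ring_nf
    rw [hcpow]
    have hfac : ↑(τ ^ a) * Complex.exp (↑θ * I) - 1
        = Complex.exp ((θ:ℝ) * I) * ((↑(τ ^ a) : ℂ) + z) := by
      rw [hz, mul_add, mul_neg, ← Complex.exp_add,
        show ((θ:ℝ):ℂ) * I + ((-θ : ℝ) : ℂ) * I = 0 by push_cast; ring,
        Complex.exp_zero]
      ring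
    rw [hfac, mul_inv, ← Complex.exp_neg,
      show -(((θ:ℝ):ℂ) * I) = ((-θ : ℝ):ℂ) * I by push_cast; ring]
  -- substitution u = τ ^ a
  have hsub := integral_comp_rpow_Ioi
    (fun u : ℝ => (s : ℝ) • ((↑(u ^ (s-1)) : ℂ) * ((u:ℂ) + z)⁻¹)) (p := a) ha0.ne'
  have hLsub : (∫ x in Ioi (0:ℝ), (|a| * x ^ (a - 1)) •
        ((s : ℝ) • ((↑((x ^ a) ^ (s-1)) : ℂ) * ((↑(x ^ a):ℂ) + z)⁻¹)))
      = ∫ x in Ioi (0:ℝ), ((↑(x ^ a) : ℂ) + z)⁻¹ := by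
    refine setIntegral_congr_fun measurableSet_Ioi ?_
    intro x hx
    have hx0 : (0:ℝ) < x := hx
    have e1 : (x ^ a) ^ (s - 1) = x ^ (1 - a) := by
      rw [← Real.rpow_mul hx0.le]
      congr 1
      rw [mul_sub, has, mul_one]
    show (|a| * x ^ (a - 1)) • ((s : ℝ) • ((↑((x ^ a) ^ (s-1)) : ℂ) * ((↑(x ^ a):ℂ) + z)⁻¹))
        = ((↑(x ^ a) : ℂ) + z)⁻¹
    rw [smul_smul, _root_.abs_of_pos ha0, e1, Complex.real_smul]
    rw [show (↑(a * x ^ (a - 1) * s) : ℂ) * (↑(x ^ (1 - a)) * ((↑(x ^ a):ℂ) + z)⁻¹)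
        = ↑(a * s * (x ^ (a - 1) * x ^ (1 - a))) * ((↑(x ^ a):ℂ) + z)⁻¹ by push_cast; ring]
    rw [← Real.rpow_add hx0, show (a - 1 + (1 - a) : ℝ) = 0 by ring, Real.rpow_zero, has]
    norm_num
  rw [hLsub] at hsub
  have hKz := K_val s hs0 hs1 z hzre
  have hint2 : (∫ x in Ioi (0:ℝ), ((↑(x ^ a) : ℂ) + z)⁻¹)
      = (s:ℂ) * (↑(π / Real.sin (π * s)) * z ^ ((s:ℂ) - 1)) := by
    rw [hsub, integral_smul, hKz, Complex.real_smul]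
  -- z ^ (s - 1)
  have hzpow : z ^ ((s:ℂ) - 1) = Complex.exp (↑((π - θ) * (s - 1)) * I) := by
    rw [hzexp, Complex.cpow_def_of_ne_zero (Complex.exp_ne_zero _),
      Complex.log_exp (by simp; linarith) (by simp; linarith)]
    congr 1
    push_cast
    ring
  -- assemble
  have hJ : (∫ τ in Set.Ioi (0:ℝ), ((Complex.I * (τ : ℂ)) ^ ((a : ℝ) : ℂ) - 1)⁻¹)
      = Complex.exp (((-θ : ℝ) : ℂ) * I) *
        ((s:ℂ) * (↑(π / Real.sin (π * s)) * z ^ ((s:ℂ) - 1))) := by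
    rw [setIntegral_congr_fun measurableSet_Ioi hpt, integral_const_mul, hint2]
  have hγ : Complex.exp (((-θ : ℝ) : ℂ) * I) * Complex.exp (↑((π - θ) * (s - 1)) * I)
      = Complex.exp (↑(-θ + (π - θ) * (s - 1)) * I) := by
    rw [← Complex.exp_add]
    congr 1
    push_cast
    ring
  set γ : ℝ := -θ + (π - θ) * (s - 1) with hγdef
  set r : ℝ := s * (π / Real.sin (π * s)) with hr
  have hexpr : (Complex.I)⁻¹ * (∫ τ in Set.Ioi (0:ℝ),
      ((Complex.I * (τ : ℂ)) ^ ((a : ℝ) : ℂ) - 1)⁻¹)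
      = (r : ℂ) * (-I * Complex.exp ((γ:ℝ) * I)) := by
    rw [hJ, hzpow, inv_I]
    rw [show Complex.exp (((-θ : ℝ) : ℂ) * I) * ((s:ℂ) * (↑(π / Real.sin (π * s))
        * Complex.exp (↑((π - θ) * (s - 1)) * I)))
      = ((s:ℂ) * ↑(π / Real.sin (π * s))) * (Complex.exp (((-θ : ℝ) : ℂ) * I)
        * Complex.exp (↑((π - θ) * (s - 1)) * I)) by ring, hγ, hr]
    push_cast
    ring
  have hre : ((r : ℂ) * (-I * Complex.exp ((γ:ℝ) * I))).re = r * Real.sin γ := by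
    rw [Complex.exp_mul_I, ← Complex.ofReal_cos, ← Complex.ofReal_sin]
    simp only [Complex.mul_re, Complex.mul_im, Complex.neg_re, Complex.neg_im,
      Complex.I_re, Complex.I_im, Complex.ofReal_re, Complex.ofReal_im,
      Complex.add_re, Complex.add_im]
    ring
  rw [hexpr, hre]
  -- final trigonometric arithmetic
  have hD : (π/2) * (1 / (H + 1/2)) = π * s := by
    rw [hs, ha, show (2*H+1 : ℝ) = 2*(H+1/2) by ring, mul_inv, div_eq_mul_inv, one_div]
    ring
  have hγT : γ = -((π/2) * (H - 1/2) / (H + 1/2) + π) := by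
    rw [hγdef, hθ, hs, ha]
    field_simp
    ring
  have hsinγ : Real.sin γ = Real.sin ((π/2) * (H - 1/2) / (H + 1/2)) := by
    rw [hγT, Real.sin_neg, Real.sin_add_pi, neg_neg]
  rw [hsinγ, hr, hD, hs, ha]
  ring
end

section
/- Let H ∈ (0,1), γ ∈ (−3/4, −1/2). The function g^a(μ) = ∑_{k=1}^∞ (2H+1)/((k+γ)^{2H+1} − μ^{2H+1}) is strictly increasing on each interval (k+γ, k+1+γ) (k ≥ 1), with derivative g^a{}'(μ) = ∑_{k=1}^∞ (2H+1)² μ^{2H} / ((k+γ)^{2H+1} − μ^{2H+1})², and has exactly one root in each interval (k+γ, k+1+γ). -/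
open Real Set Filter

lemma aux_base_pos (γ : ℝ) (hγ0 : -3/4 < γ) (k : ℕ) : (0:ℝ) < (k:ℝ) + 1 + γ := by
  have hk : (0:ℝ) ≤ k := Nat.cast_nonneg k; linarith

lemma aux_A_ge (p γ : ℝ) (hp0 : 0 < p) (hγ0 : -3/4 < γ) (k : ℕ) :
    ((k:ℝ)+1) ^ p / 4 ^ p ≤ ((k:ℝ) + 1 + γ) ^ p := by
  rw [← Real.div_rpow (by positivity) (by norm_num)]
  refine Real.rpow_le_rpow (by positivity) ?_ hp0.le
  have hk : (0:ℝ) ≤ k := Nat.cast_nonneg k; linarith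

lemma aux_Ainv_le (p γ : ℝ) (hp1 : 1 < p) (hγ0 : -3/4 < γ) (k : ℕ) :
    (((k:ℝ) + 1 + γ) ^ p)⁻¹ ≤ 4 ^ p := by
  have hp0 : (0:ℝ) < p := by linarith
  have h4p : (0:ℝ) < 4 ^ p := Real.rpow_pos_of_pos (by norm_num) p
  have h1 : (1:ℝ) ≤ ((k:ℝ)+1) ^ p :=
    Real.one_le_rpow (by have : (0:ℝ) ≤ k := Nat.cast_nonneg k; linarith) hp0.le
  have h2 : (1:ℝ)/4^p ≤ ((k:ℝ) + 1 + γ) ^ p :=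
    le_trans ((div_le_div_iff_of_pos_right h4p).2 h1) (aux_A_ge p γ hp0 hγ0 k)
  have h3 := inv_anti₀ (by positivity) h2
  simpa using h3

lemma aux_sumInv (p γ : ℝ) (hp1 : 1 < p) (hγ0 : -3/4 < γ) :
    Summable fun k : ℕ => (((k:ℝ) + 1 + γ) ^ p)⁻¹ := by
  have hp0 : (0:ℝ) < p := by linarith
  have h1 : Summable (fun k : ℕ => (((k:ℝ)+1) ^ p)⁻¹) := by
    have h := (summable_nat_add_iff 1).2 ((Real.summable_nat_rpow_inv (p := p)).2 hp1)
    simpa using h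
  refine Summable.of_nonneg_of_le
    (fun k => inv_nonneg.2 (Real.rpow_nonneg (aux_base_pos γ hγ0 k).le p)) (fun k => ?_)
    (h1.mul_left (4 ^ p))
  have h2 := inv_anti₀ (by positivity) (aux_A_ge p γ hp0 hγ0 k)
  calc (((k:ℝ) + 1 + γ) ^ p)⁻¹ ≤ (((k:ℝ)+1)^p / 4^p)⁻¹ := h2
    _ = 4^p * (((k:ℝ)+1)^p)⁻¹ := by rw [inv_div, div_eq_mul_inv]

lemma aux_tend (p γ : ℝ) (hp0 : 0 < p) :
    Tendsto (fun k : ℕ => ((k:ℝ) + 1 + γ) ^ p) atTop atTop := by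
  have h1 : Tendsto (fun k : ℕ => (k:ℝ) + 1 + γ) atTop atTop :=
    tendsto_atTop_add_const_right _ γ
      (tendsto_atTop_add_const_right _ 1 tendsto_natCast_atTop_atTop)
  exact (tendsto_rpow_atTop hp0).comp h1

lemma aux_shift1 (p γ : ℝ) (hp1 : 1 < p) (hγ0 : -3/4 < γ) (t : ℝ) :
    Summable fun k : ℕ => (((k:ℝ) + 1 + γ) ^ p - t)⁻¹ := by
  have hp0 : (0:ℝ) < p := by linarith
  refine summable_of_isBigO_nat (aux_sumInv p γ hp1 hγ0) (Asymptotics.IsBigO.of_bound 2 ?_)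
  filter_upwards [(aux_tend p γ hp0).eventually_ge_atTop (2 * max t 1)] with k hk
  have hmax : t ≤ max t 1 := le_max_left _ _
  have h1 : (0:ℝ) < max t 1 := lt_of_lt_of_le one_pos (le_max_right _ _)
  have hApos : (0:ℝ) < ((k:ℝ) + 1 + γ) ^ p := Real.rpow_pos_of_pos (aux_base_pos γ hγ0 k) p
  have h2 : ((k:ℝ) + 1 + γ) ^ p / 2 ≤ ((k:ℝ) + 1 + γ) ^ p - t := by linarith
  have h3 : (0:ℝ) < ((k:ℝ) + 1 + γ) ^ p / 2 := by linarith
  rw [Real.norm_eq_abs, Real.norm_eq_abs, abs_of_nonneg (inv_nonneg.2 (by linarith)),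
    abs_of_nonneg (inv_nonneg.2 hApos.le)]
  calc (((k:ℝ) + 1 + γ) ^ p - t)⁻¹ ≤ (((k:ℝ) + 1 + γ) ^ p / 2)⁻¹ := inv_anti₀ h3 h2
    _ = 2 * ((((k:ℝ) + 1 + γ) ^ p))⁻¹ := by rw [inv_div, div_eq_mul_inv]

lemma aux_shift2 (p γ : ℝ) (hp1 : 1 < p) (hγ0 : -3/4 < γ) (t : ℝ) :
    Summable fun k : ℕ => ((((k:ℝ) + 1 + γ) ^ p - t) ^ 2)⁻¹ := by
  have hp0 : (0:ℝ) < p := by linarith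
  refine summable_of_isBigO_nat (aux_sumInv p γ hp1 hγ0)
    (Asymptotics.IsBigO.of_bound (4 * 4 ^ p) ?_)
  filter_upwards [(aux_tend p γ hp0).eventually_ge_atTop (2 * max t 1)] with k hk
  have hmax : t ≤ max t 1 := le_max_left _ _
  have h1 : (0:ℝ) < max t 1 := lt_of_lt_of_le one_pos (le_max_right _ _)
  have hApos : (0:ℝ) < ((k:ℝ) + 1 + γ) ^ p := Real.rpow_pos_of_pos (aux_base_pos γ hγ0 k) p
  have h2 : ((k:ℝ) + 1 + γ) ^ p / 2 ≤ ((k:ℝ) + 1 + γ) ^ p - t := by linarith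
  have h3 : (0:ℝ) < ((k:ℝ) + 1 + γ) ^ p / 2 := by linarith
  rw [Real.norm_eq_abs, Real.norm_eq_abs, abs_of_nonneg (inv_nonneg.2 (sq_nonneg _)),
    abs_of_nonneg (inv_nonneg.2 hApos.le)]
  have h4 : (((k:ℝ) + 1 + γ) ^ p / 2)^2 ≤ (((k:ℝ) + 1 + γ) ^ p - t)^2 := by nlinarith
  have h5 : ((((k:ℝ) + 1 + γ) ^ p / 2)^2)⁻¹ = 4 * ((((k:ℝ) + 1 + γ) ^ p)^2)⁻¹ := by
    rw [show (((k:ℝ) + 1 + γ) ^ p / 2)^2 = (((k:ℝ) + 1 + γ) ^ p)^2/4 by ring, inv_div,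
      div_eq_mul_inv]
  have h6 := aux_Ainv_le p γ hp1 hγ0 k
  have h7 : (0:ℝ) ≤ ((((k:ℝ) + 1 + γ) ^ p))⁻¹ := inv_nonneg.2 hApos.le
  calc ((((k:ℝ) + 1 + γ) ^ p - t)^2)⁻¹ ≤ ((((k:ℝ) + 1 + γ) ^ p / 2)^2)⁻¹ :=
        inv_anti₀ (pow_pos h3 2) h4
    _ = 4 * (((((k:ℝ) + 1 + γ) ^ p))⁻¹ * ((((k:ℝ) + 1 + γ) ^ p))⁻¹) := by
        rw [h5, sq, mul_inv]
    _ ≤ 4 * (4^p * ((((k:ℝ) + 1 + γ) ^ p))⁻¹) := by nlinarith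
    _ = 4 * 4^p * ((((k:ℝ) + 1 + γ) ^ p))⁻¹ := by ring

lemma aux_summF (p γ : ℝ) (hp1 : 1 < p) (hγ0 : -3/4 < γ) (t : ℝ) :
    Summable fun k : ℕ => p / (((k:ℝ) + 1 + γ) ^ p - t) := by
  simpa [div_eq_mul_inv] using (aux_shift1 p γ hp1 hγ0 t).mul_left p

lemma aux_summD (p γ : ℝ) (hp1 : 1 < p) (hγ0 : -3/4 < γ) (t c : ℝ) :
    Summable fun k : ℕ => c / ((((k:ℝ) + 1 + γ) ^ p - t) ^ 2) := by
  simpa [div_eq_mul_inv] using (aux_shift2 p γ hp1 hγ0 t).mul_left c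

lemma aux_key_lt (p γ : ℝ) (hp0 : 0 < p) (hγ0 : -3/4 < γ) (n k : ℕ) (μ : ℝ)
    (hμ : (n:ℝ) + γ < μ) (hk : k < n) : ((k:ℝ) + 1 + γ) ^ p < μ ^ p := by
  have hk0 : k + 1 ≤ n := hk
  have hk' : (k:ℝ) + 1 ≤ (n:ℝ) := by exact_mod_cast hk0
  exact Real.rpow_lt_rpow (aux_base_pos γ hγ0 k).le (by linarith) hp0

lemma aux_key_gt (p γ : ℝ) (hp0 : 0 < p) (n k : ℕ) (μ : ℝ)
    (hμ0 : 0 < μ) (hμ : μ < (n:ℝ) + 1 + γ) (hk : n ≤ k) : μ ^ p < ((k:ℝ) + 1 + γ) ^ p := by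
  have hk' : (n:ℝ) ≤ (k:ℝ) := by exact_mod_cast hk
  exact Real.rpow_lt_rpow hμ0.le (by linarith) hp0

lemma aux_deriv_term (p γ : ℝ) (hp0 : 0 < p) (k : ℕ) (x : ℝ) (hx : 0 < x)
    (hne : ((k:ℝ) + 1 + γ) ^ p ≠ x ^ p) :
    HasDerivAt (fun y : ℝ => p / (((k:ℝ) + 1 + γ) ^ p - y ^ p))
      (p ^ 2 * x ^ (p-1) / ((((k:ℝ) + 1 + γ) ^ p - x ^ p) ^ 2)) x := by
  have h1 : HasDerivAt (fun y : ℝ => y ^ p) (p * x ^ (p - 1)) x :=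
    Real.hasDerivAt_rpow_const (Or.inl hx.ne')
  have h2 : HasDerivAt (fun y : ℝ => ((k:ℝ) + 1 + γ) ^ p - y ^ p) (0 - p * x ^ (p-1)) x :=
    (hasDerivAt_const x (((k:ℝ) + 1 + γ) ^ p)).sub h1
  have h3 : HasDerivAt (fun y : ℝ => (((k:ℝ) + 1 + γ) ^ p - y ^ p)⁻¹)
      (-(0 - p * x ^ (p-1)) / (((k:ℝ) + 1 + γ) ^ p - x ^ p) ^ 2) x :=
    h2.inv (sub_ne_zero.2 hne)
  have h4 := h3.const_mul p
  rw [show p ^ 2 * x ^ (p-1) / ((((k:ℝ) + 1 + γ) ^ p - x ^ p) ^ 2) =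
    p * (-(0 - p * x ^ (p-1)) / (((k:ℝ) + 1 + γ) ^ p - x ^ p) ^ 2) by ring]
  simpa only [div_eq_mul_inv] using h4
lemma aux_hasDeriv (p γ : ℝ) (hp1 : 1 < p) (hγ0 : -3/4 < γ) (hγ1 : γ < -1/2)
    (n : ℕ) (hn : 1 ≤ n) (μ : ℝ) (hμmem : μ ∈ Ioo ((n:ℝ) + γ) ((n:ℝ) + 1 + γ)) :
    HasDerivAt (fun z : ℝ => ∑' k : ℕ, p / (((k:ℝ) + 1 + γ) ^ p - z ^ p))
      (∑' k : ℕ, p ^ 2 * μ ^ (p-1) / ((((k:ℝ) + 1 + γ) ^ p - μ ^ p) ^ 2)) μ := by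
  have hp0 : (0:ℝ) < p := by linarith
  obtain ⟨hμa, hμb⟩ := hμmem
  have hn1 : (1:ℝ) ≤ (n:ℝ) := by exact_mod_cast hn
  have ha0 : (0:ℝ) < (n:ℝ) + γ := by linarith
  have hμ0 : 0 < μ := lt_trans ha0 hμa
  obtain ⟨a', ha'⟩ : ∃ x : ℝ, x = (((n:ℝ) + γ) + μ) / 2 := ⟨_, rfl⟩
  obtain ⟨b', hb'⟩ : ∃ x : ℝ, x = (μ + ((n:ℝ) + 1 + γ)) / 2 := ⟨_, rfl⟩
  have haa' : (n:ℝ) + γ < a' := by rw [ha']; linarith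
  have ha'μ : a' < μ := by rw [ha']; linarith
  have hμb' : μ < b' := by rw [hb']; linarith
  have hb'b : b' < (n:ℝ) + 1 + γ := by rw [hb']; linarith
  have ha'0 : 0 < a' := lt_trans ha0 haa'
  have hb'0 : 0 < b' := lt_trans hμ0 hμb'
  have hδ1 : 0 < a' ^ p - ((n:ℝ) + γ) ^ p := by
    have := Real.rpow_lt_rpow ha0.le haa' hp0; linarith
  have hδ2 : 0 < ((n:ℝ) + 1 + γ) ^ p - b' ^ p := by
    have := Real.rpow_lt_rpow hb'0.le hb'b hp0; linarith
  obtain ⟨u, hu_def⟩ : ∃ u : ℕ → ℝ, u = fun k : ℕ =>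
      if k < n then p ^ 2 * b' ^ (p-1) / (a' ^ p - ((n:ℝ) + γ) ^ p) ^ 2
      else if k < 2*n+2 then p ^ 2 * b' ^ (p-1) / (((n:ℝ) + 1 + γ) ^ p - b' ^ p) ^ 2
      else p ^ 2 * b' ^ (p-1) * 4 * ((((k:ℝ) + 1 + γ) ^ p) ^ 2)⁻¹ := ⟨_, rfl⟩
  have hnum'' : (0:ℝ) ≤ p ^ 2 * b' ^ (p-1) :=
    mul_nonneg (by positivity) (Real.rpow_nonneg hb'0.le _)
  have hbound : ∀ k : ℕ, ∀ x ∈ Ioo a' b',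
      ‖p ^ 2 * x ^ (p-1) / ((((k:ℝ) + 1 + γ) ^ p - x ^ p) ^ 2)‖ ≤ u k := by
    rintro k x ⟨hxa, hxb⟩
    have hx0 : 0 < x := lt_trans ha'0 hxa
    have hnum : x ^ (p-1) ≤ b' ^ (p-1) := Real.rpow_le_rpow hx0.le (by linarith) (by linarith)
    have hnum0 : (0:ℝ) ≤ x ^ (p-1) := Real.rpow_nonneg hx0.le _
    have hnum' : p ^ 2 * x ^ (p-1) ≤ p ^ 2 * b' ^ (p-1) :=
      mul_le_mul_of_nonneg_left hnum (by positivity)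
    have hxp_lt : x ^ p < b' ^ p := Real.rpow_lt_rpow hx0.le hxb hp0
    have hxp_gt : a' ^ p < x ^ p := Real.rpow_lt_rpow ha'0.le hxa hp0
    rw [Real.norm_eq_abs,
      abs_of_nonneg (div_nonneg (mul_nonneg (by positivity) hnum0) (sq_nonneg _))]
    rw [hu_def]
    by_cases h1 : k < n
    · simp only [if_pos h1]
      have hk0 : k + 1 ≤ n := h1
      have hk' : (k:ℝ) + 1 ≤ (n:ℝ) := by exact_mod_cast hk0
      have hAk : ((k:ℝ) + 1 + γ) ^ p ≤ ((n:ℝ) + γ) ^ p :=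
        Real.rpow_le_rpow (aux_base_pos γ hγ0 k).le (by linarith) hp0.le
      have hd : a' ^ p - ((n:ℝ) + γ) ^ p ≤ x ^ p - ((k:ℝ) + 1 + γ) ^ p := by linarith
      have hd2 : (a' ^ p - ((n:ℝ) + γ) ^ p) ^ 2 ≤ (((k:ℝ) + 1 + γ) ^ p - x ^ p) ^ 2 := by
        rw [show (((k:ℝ) + 1 + γ) ^ p - x ^ p) ^ 2 = (x ^ p - ((k:ℝ) + 1 + γ) ^ p) ^ 2 by ring]
        exact pow_le_pow_left₀ hδ1.le hd 2
      exact div_le_div₀ hnum'' hnum' (pow_pos hδ1 2) hd2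
    · simp only [if_neg h1]
      have hk' : (n:ℝ) ≤ (k:ℝ) := by exact_mod_cast not_lt.1 h1
      by_cases h2 : k < 2*n+2
      · simp only [if_pos h2]
        have hAk : ((n:ℝ) + 1 + γ) ^ p ≤ ((k:ℝ) + 1 + γ) ^ p :=
          Real.rpow_le_rpow (aux_base_pos γ hγ0 n).le (by linarith) hp0.le
        have hd : ((n:ℝ) + 1 + γ) ^ p - b' ^ p ≤ ((k:ℝ) + 1 + γ) ^ p - x ^ p := by linarith
        have hd2 : (((n:ℝ) + 1 + γ) ^ p - b' ^ p) ^ 2 ≤ (((k:ℝ) + 1 + γ) ^ p - x ^ p) ^ 2 :=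
          pow_le_pow_left₀ hδ2.le hd 2
        exact div_le_div₀ hnum'' hnum' (pow_pos hδ2 2) hd2
      · simp only [if_neg h2]
        have hk2 : (2*(n:ℝ)+2) ≤ (k:ℝ) := by
          have h3 : 2*n+2 ≤ k := not_lt.1 h2
          exact_mod_cast h3
        have hbpos : (0:ℝ) < (n:ℝ) + 1 + γ := by linarith
        have h2b : 2 * ((n:ℝ) + 1 + γ) ≤ (k:ℝ) + 1 + γ := by linarith
        have hAk : 2 * ((n:ℝ) + 1 + γ) ^ p ≤ ((k:ℝ) + 1 + γ) ^ p := by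
          have h1' : (2*((n:ℝ) + 1 + γ)) ^ p ≤ ((k:ℝ) + 1 + γ) ^ p :=
            Real.rpow_le_rpow (by linarith) h2b hp0.le
          have h3' : (2:ℝ) ≤ 2 ^ p := by
            calc (2:ℝ) = 2 ^ (1:ℝ) := (Real.rpow_one 2).symm
              _ ≤ 2 ^ p := Real.rpow_le_rpow_of_exponent_le one_le_two hp1.le
          have h2' : 2 * ((n:ℝ) + 1 + γ) ^ p ≤ (2*((n:ℝ) + 1 + γ)) ^ p := by
            rw [Real.mul_rpow (by norm_num) hbpos.le]
            nlinarith [Real.rpow_pos_of_pos hbpos p]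
          linarith
        have hxpb : x ^ p ≤ ((n:ℝ) + 1 + γ) ^ p := by
          have := Real.rpow_lt_rpow hb'0.le hb'b hp0
          linarith
        have hApos' : (0:ℝ) < ((k:ℝ) + 1 + γ) ^ p :=
          Real.rpow_pos_of_pos (aux_base_pos γ hγ0 k) p
        have hd : ((k:ℝ) + 1 + γ) ^ p / 2 ≤ ((k:ℝ) + 1 + γ) ^ p - x ^ p := by linarith
        have hhalf : (0:ℝ) < ((k:ℝ) + 1 + γ) ^ p / 2 := by linarith
        have hd2 : (((k:ℝ) + 1 + γ) ^ p / 2) ^ 2 ≤ (((k:ℝ) + 1 + γ) ^ p - x ^ p) ^ 2 :=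
          pow_le_pow_left₀ hhalf.le hd 2
        calc p^2 * x^(p-1) / (((k:ℝ) + 1 + γ) ^ p - x^p)^2
            ≤ p^2 * b'^(p-1) / (((k:ℝ) + 1 + γ) ^ p / 2)^2 :=
              div_le_div₀ hnum'' hnum' (pow_pos hhalf 2) hd2
          _ = p^2 * b'^(p-1) * 4 * ((((k:ℝ) + 1 + γ) ^ p)^2)⁻¹ := by
              rw [show (((k:ℝ) + 1 + γ) ^ p / 2)^2 = (((k:ℝ) + 1 + γ) ^ p)^2/4 by ring,
                div_div_eq_mul_div, div_eq_mul_inv]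
  have hu_summ : Summable u := by
    rw [← summable_nat_add_iff (2*n+2)]
    have heq : (fun k : ℕ => u (k + (2*n+2))) =
        fun k : ℕ => p^2 * b'^(p-1) * 4 * ((((((k + (2*n+2)):ℕ):ℝ) + 1 + γ) ^ p) ^ 2)⁻¹ := by
      funext k
      rw [hu_def]
      have h1 : ¬ (k + (2*n+2) < n) := by omega
      have h2 : ¬ (k + (2*n+2) < 2*n+2) := by omega
      simp only [if_neg h1, if_neg h2]
    rw [heq]
    have hs : Summable fun k : ℕ => ((((k:ℝ) + 1 + γ) ^ p) ^ 2)⁻¹ := by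
      have := aux_shift2 p γ hp1 hγ0 0
      simpa using this
    exact ((summable_nat_add_iff
      (f := fun k : ℕ => ((((k:ℝ) + 1 + γ) ^ p) ^ 2)⁻¹) (2*n+2)).2 hs).mul_left _
  have hf0 : Summable fun k : ℕ => p / (((k:ℝ) + 1 + γ) ^ p - μ ^ p) := aux_summF p γ hp1 hγ0 _
  have hterm : ∀ k : ℕ, ∀ x ∈ Ioo a' b',
      HasDerivAt (fun y => p / (((k:ℝ) + 1 + γ) ^ p - y ^ p))
        (p ^ 2 * x ^ (p-1) / ((((k:ℝ) + 1 + γ) ^ p - x ^ p) ^ 2)) x := by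
    rintro k x ⟨hxa, hxb⟩
    have hx0 : 0 < x := lt_trans ha'0 hxa
    refine aux_deriv_term p γ hp0 k x hx0 ?_
    by_cases h1 : k < n
    · exact ne_of_lt (aux_key_lt p γ hp0 hγ0 n k x (lt_trans haa' hxa) h1)
    · exact ne_of_gt (aux_key_gt p γ hp0 n k x hx0 (lt_trans hxb hb'b) (not_lt.1 h1))
  exact hasDerivAt_tsum_of_isPreconnected
    (g := fun (k : ℕ) (y : ℝ) => p / (((k:ℝ) + 1 + γ) ^ p - y ^ p))
    (g' := fun (k : ℕ) (y : ℝ) => p ^ 2 * y ^ (p-1) / ((((k:ℝ) + 1 + γ) ^ p - y ^ p) ^ 2))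
    hu_summ isOpen_Ioo isPreconnected_Ioo hterm hbound ⟨ha'μ, hμb'⟩ hf0 ⟨ha'μ, hμb'⟩
set_option maxHeartbeats 800000 in
lemma aux_neg_point (p γ : ℝ) (hp1 : 1 < p) (hγ0 : -3/4 < γ) (hγ1 : γ < -1/2)
    (n : ℕ) (hn : 1 ≤ n) :
    ∃ μ₁ : ℝ, ((n:ℝ) + γ < μ₁ ∧ μ₁ < (n:ℝ) + 1/2 + γ) ∧
      (∑' k : ℕ, p / (((k:ℝ) + 1 + γ) ^ p - μ₁ ^ p)) < 0 := by
  have hp0 : (0:ℝ) < p := by linarith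
  have hn1 : (1:ℝ) ≤ (n:ℝ) := by exact_mod_cast hn
  have ha0 : (0:ℝ) < (n:ℝ) + γ := by linarith
  have ham : (n:ℝ) + γ < (n:ℝ) + 1/2 + γ := by linarith
  have hmb : (n:ℝ) + 1/2 + γ < (n:ℝ) + 1 + γ := by linarith
  have hm0 : (0:ℝ) < (n:ℝ) + 1/2 + γ := by linarith
  have hAa : (((n-1:ℕ):ℝ) + 1 + γ) ^ p = ((n:ℝ) + γ) ^ p := by
    rw [Nat.cast_pred hn]; congr 1; ring
  obtain ⟨S, hS⟩ : ∃ S : ℝ,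
      S = ∑' k : ℕ, p / ((((k+n:ℕ):ℝ) + 1 + γ) ^ p - ((n:ℝ) + 1/2 + γ) ^ p) := ⟨_, rfl⟩
  have hsummS : Summable fun k : ℕ =>
      p / ((((k+n:ℕ):ℝ) + 1 + γ) ^ p - ((n:ℝ) + 1/2 + γ) ^ p) :=
    (summable_nat_add_iff
      (f := fun k : ℕ => p / (((k:ℝ) + 1 + γ) ^ p - ((n:ℝ) + 1/2 + γ) ^ p)) n).2
      (aux_summF p γ hp1 hγ0 (((n:ℝ) + 1/2 + γ) ^ p))
  have hε : 0 < p / (|S| + 1) := div_pos hp0 (by positivity)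
  have hev1 : ∀ᶠ x in nhdsWithin ((n:ℝ) + γ) (Ioi ((n:ℝ) + γ)),
      x ^ p < ((n:ℝ) + γ) ^ p + p / (|S| + 1) := by
    have hct : ContinuousWithinAt (fun x : ℝ => x ^ p) (Ioi ((n:ℝ) + γ)) ((n:ℝ) + γ) :=
      (Real.continuousAt_rpow_const _ p (Or.inl ha0.ne')).continuousWithinAt
    have h := hct (Iio_mem_nhds
      (show ((n:ℝ) + γ) ^ p < ((n:ℝ) + γ) ^ p + p / (|S| + 1) by linarith))
    filter_upwards [h] with x hx
    exact hx
  have hev2 : Ioo ((n:ℝ) + γ) ((n:ℝ) + 1/2 + γ) ∈ nhdsWithin ((n:ℝ) + γ) (Ioi ((n:ℝ) + γ)) :=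
    Ioo_mem_nhdsGT_of_mem ⟨le_refl _, ham⟩
  obtain ⟨μ₁, hμ₁p, hμ₁mem⟩ := (hev1.and hev2).exists
  have hμ₁a : (n:ℝ) + γ < μ₁ := hμ₁mem.1
  have hμ₁m : μ₁ < (n:ℝ) + 1/2 + γ := hμ₁mem.2
  have hμ₁0 : 0 < μ₁ := lt_trans ha0 hμ₁a
  have hμ₁b : μ₁ < (n:ℝ) + 1 + γ := lt_trans hμ₁m hmb
  have hsumm₁ : Summable fun k : ℕ => p / (((k:ℝ) + 1 + γ) ^ p - μ₁ ^ p) :=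
    aux_summF p γ hp1 hγ0 _
  refine ⟨μ₁, ⟨hμ₁a, hμ₁m⟩, ?_⟩
  rw [← Summable.sum_add_tsum_nat_add n hsumm₁]
  have hap : ((n:ℝ) + γ) ^ p < μ₁ ^ p := by
    have h := aux_key_lt p γ hp0 hγ0 n (n-1) μ₁ hμ₁a (by omega)
    rwa [hAa] at h
  have hhead : ∑ i ∈ Finset.range n, p / (((i:ℝ) + 1 + γ) ^ p - μ₁ ^ p) ≤
      p / (((n:ℝ) + γ) ^ p - μ₁ ^ p) := by
    obtain ⟨n', hn'⟩ : ∃ n', n = n' + 1 := ⟨n - 1, by omega⟩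
    have hAa' : (((n':ℕ):ℝ) + 1 + γ) ^ p = ((n:ℝ) + γ) ^ p := by
      have h : ((n':ℕ):ℝ) = ((n:ℝ) - 1) := by rw [hn']; push_cast; ring
      rw [h]; congr 1; ring
    rw [hn', Finset.sum_range_succ, ← hn']
    have h1 : ∑ i ∈ Finset.range n', p / (((i:ℝ) + 1 + γ) ^ p - μ₁ ^ p) ≤ 0 := by
      apply Finset.sum_nonpos
      intro i hi
      have hi' := Finset.mem_range.1 hi
      have := aux_key_lt p γ hp0 hγ0 n i μ₁ hμ₁a (by omega)
      exact div_nonpos_of_nonneg_of_nonpos hp0.le (by linarith)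
    rw [hAa']
    linarith
  have htail : ∑' k : ℕ, p / ((((k+n:ℕ):ℝ) + 1 + γ) ^ p - μ₁ ^ p) ≤ S := by
    rw [hS]
    have h1 : Summable fun k : ℕ => p / ((((k+n:ℕ):ℝ) + 1 + γ) ^ p - μ₁ ^ p) :=
      (summable_nat_add_iff
        (f := fun k : ℕ => p / (((k:ℝ) + 1 + γ) ^ p - μ₁ ^ p)) n).2
        (aux_summF p γ hp1 hγ0 (μ₁ ^ p))
    refine Summable.tsum_le_tsum
      (f := fun k : ℕ => p / ((((k+n:ℕ):ℝ) + 1 + γ) ^ p - μ₁ ^ p))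
      (g := fun k : ℕ => p / ((((k+n:ℕ):ℝ) + 1 + γ) ^ p - ((n:ℝ) + 1/2 + γ) ^ p))
      (fun k => ?_) h1 hsummS
    have hgtm : ((n:ℝ) + 1/2 + γ) ^ p < (((k+n:ℕ):ℝ) + 1 + γ) ^ p := by
      have h := aux_key_gt p γ hp0 n (k+n) ((n:ℝ) + 1/2 + γ) hm0 hmb (by omega)
      exact_mod_cast h
    have hmp : μ₁ ^ p ≤ ((n:ℝ) + 1/2 + γ) ^ p := Real.rpow_le_rpow hμ₁0.le hμ₁m.le hp0.le
    exact div_le_div_of_nonneg_left hp0.le (by linarith) (by linarith)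
  have hd : 0 < μ₁ ^ p - ((n:ℝ) + γ) ^ p := by linarith
  have hd2 : μ₁ ^ p - ((n:ℝ) + γ) ^ p < p / (|S| + 1) := by linarith [hμ₁p]
  have hlast : |S| + 1 ≤ p / (μ₁ ^ p - ((n:ℝ) + γ) ^ p) := by
    rw [le_div_iff₀ hd]
    have := (lt_div_iff₀ (by positivity : (0:ℝ) < |S| + 1)).1 hd2
    nlinarith
  have heq : p / (((n:ℝ) + γ) ^ p - μ₁ ^ p) = -(p / (μ₁ ^ p - ((n:ℝ) + γ) ^ p)) := by
    rw [show ((n:ℝ) + γ) ^ p - μ₁ ^ p = -(μ₁ ^ p - ((n:ℝ) + γ) ^ p) by ring, div_neg]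
  have habs := le_abs_self S
  calc (∑ i ∈ Finset.range n, p / (((i:ℝ) + 1 + γ) ^ p - μ₁ ^ p)) +
        ∑' k : ℕ, p / ((((k+n:ℕ):ℝ) + 1 + γ) ^ p - μ₁ ^ p)
      ≤ p / (((n:ℝ) + γ) ^ p - μ₁ ^ p) + S := add_le_add hhead htail
    _ = -(p / (μ₁ ^ p - ((n:ℝ) + γ) ^ p)) + S := by rw [heq]
    _ ≤ -(|S| + 1) + S := by linarith
    _ < 0 := by linarith
set_option maxHeartbeats 800000 in
lemma aux_pos_point (p γ : ℝ) (hp1 : 1 < p) (hγ0 : -3/4 < γ) (hγ1 : γ < -1/2)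
    (n : ℕ) (hn : 1 ≤ n) :
    ∃ μ₂ : ℝ, ((n:ℝ) + 1/2 + γ < μ₂ ∧ μ₂ < (n:ℝ) + 1 + γ) ∧
      0 < ∑' k : ℕ, p / (((k:ℝ) + 1 + γ) ^ p - μ₂ ^ p) := by
  have hp0 : (0:ℝ) < p := by linarith
  have hn1 : (1:ℝ) ≤ (n:ℝ) := by exact_mod_cast hn
  have ha0 : (0:ℝ) < (n:ℝ) + γ := by linarith
  have ham : (n:ℝ) + γ < (n:ℝ) + 1/2 + γ := by linarith
  have hmb : (n:ℝ) + 1/2 + γ < (n:ℝ) + 1 + γ := by linarith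
  have hm0 : (0:ℝ) < (n:ℝ) + 1/2 + γ := by linarith
  obtain ⟨M, hM⟩ : ∃ M : ℝ,
      M = ∑ i ∈ Finset.range n, p / (((n:ℝ) + 1/2 + γ) ^ p - ((i:ℝ) + 1 + γ) ^ p) := ⟨_, rfl⟩
  have hM0 : 0 ≤ M := by
    rw [hM]
    apply Finset.sum_nonneg
    intro i hi
    have := aux_key_lt p γ hp0 hγ0 n i ((n:ℝ) + 1/2 + γ) ham (Finset.mem_range.1 hi)
    exact div_nonneg hp0.le (by linarith)
  have hε' : 0 < p / (M + 1) := div_pos hp0 (by linarith)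
  have hbp : (0:ℝ) < (n:ℝ) + 1 + γ := by linarith
  have hev1' : ∀ᶠ x in nhdsWithin ((n:ℝ) + 1 + γ) (Iio ((n:ℝ) + 1 + γ)),
      ((n:ℝ) + 1 + γ) ^ p - p / (M+1) < x ^ p := by
    have hct : ContinuousWithinAt (fun x : ℝ => x ^ p) (Iio ((n:ℝ) + 1 + γ)) ((n:ℝ) + 1 + γ) :=
      (Real.continuousAt_rpow_const _ p (Or.inl hbp.ne')).continuousWithinAt
    have h := hct (Ioi_mem_nhds
      (show ((n:ℝ) + 1 + γ) ^ p - p / (M+1) < ((n:ℝ) + 1 + γ) ^ p by linarith))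
    filter_upwards [h] with x hx
    exact hx
  have hev2' : Ioo ((n:ℝ) + 1/2 + γ) ((n:ℝ) + 1 + γ) ∈
      nhdsWithin ((n:ℝ) + 1 + γ) (Iio ((n:ℝ) + 1 + γ)) :=
    Ioo_mem_nhdsLT_of_mem ⟨hmb, le_refl _⟩
  obtain ⟨μ₂, hμ₂p, hμ₂mem⟩ := (hev1'.and hev2').exists
  have hμ₂m : (n:ℝ) + 1/2 + γ < μ₂ := hμ₂mem.1
  have hμ₂b : μ₂ < (n:ℝ) + 1 + γ := hμ₂mem.2
  have hμ₂0 : 0 < μ₂ := lt_trans hm0 hμ₂m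
  have hμ₂a : (n:ℝ) + γ < μ₂ := lt_trans ham hμ₂m
  have hsumm₂ : Summable fun k : ℕ => p / (((k:ℝ) + 1 + γ) ^ p - μ₂ ^ p) :=
    aux_summF p γ hp1 hγ0 _
  refine ⟨μ₂, ⟨hμ₂m, hμ₂b⟩, ?_⟩
  rw [← Summable.sum_add_tsum_nat_add n hsumm₂]
  have hsummtail : Summable fun k : ℕ => p / ((((k+n:ℕ):ℝ) + 1 + γ) ^ p - μ₂ ^ p) :=
    (summable_nat_add_iff
      (f := fun k : ℕ => p / (((k:ℝ) + 1 + γ) ^ p - μ₂ ^ p)) n).2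
      (aux_summF p γ hp1 hγ0 (μ₂ ^ p))
  have htail_eq := Summable.tsum_eq_zero_add hsummtail
  have hhead : -M ≤ ∑ i ∈ Finset.range n, p / (((i:ℝ) + 1 + γ) ^ p - μ₂ ^ p) := by
    have hle : ∀ i ∈ Finset.range n,
        -(p / (((n:ℝ) + 1/2 + γ) ^ p - ((i:ℝ) + 1 + γ) ^ p)) ≤
          p / (((i:ℝ) + 1 + γ) ^ p - μ₂ ^ p) := by
      intro i hi
      have hi' := Finset.mem_range.1 hi
      have h1 : ((i:ℝ) + 1 + γ) ^ p < ((n:ℝ) + 1/2 + γ) ^ p :=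
        aux_key_lt p γ hp0 hγ0 n i ((n:ℝ) + 1/2 + γ) ham hi'
      have h2 : ((n:ℝ) + 1/2 + γ) ^ p ≤ μ₂ ^ p := Real.rpow_le_rpow hm0.le hμ₂m.le hp0.le
      have heq : p / (((i:ℝ) + 1 + γ) ^ p - μ₂ ^ p) =
          -(p / (μ₂ ^ p - ((i:ℝ) + 1 + γ) ^ p)) := by
        rw [show ((i:ℝ) + 1 + γ) ^ p - μ₂ ^ p = -(μ₂ ^ p - ((i:ℝ) + 1 + γ) ^ p) by ring,
          div_neg]
      rw [heq, neg_le_neg_iff]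
      exact div_le_div_of_nonneg_left hp0.le (by linarith) (by linarith)
    calc -M = ∑ i ∈ Finset.range n,
          -(p / (((n:ℝ) + 1/2 + γ) ^ p - ((i:ℝ) + 1 + γ) ^ p)) := by
          rw [hM, ← Finset.sum_neg_distrib]
      _ ≤ _ := Finset.sum_le_sum hle
  have hbpμ : 0 < ((n:ℝ) + 1 + γ) ^ p - μ₂ ^ p := by
    have := Real.rpow_lt_rpow hμ₂0.le hμ₂b hp0
    linarith
  have hterm_n : M + 1 ≤ p / ((((0+n:ℕ):ℝ) + 1 + γ) ^ p - μ₂ ^ p) := by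
    have hc : (((0+n:ℕ):ℝ) + 1 + γ) ^ p = ((n:ℝ) + 1 + γ) ^ p := by norm_num
    rw [hc, le_div_iff₀ hbpμ]
    have hd2 : ((n:ℝ) + 1 + γ) ^ p - μ₂ ^ p < p / (M+1) := by linarith [hμ₂p]
    have := (lt_div_iff₀ (by linarith : (0:ℝ) < M + 1)).1 hd2
    nlinarith
  have htailpos : 0 ≤ ∑' k : ℕ, p / ((((k+1+n:ℕ):ℝ) + 1 + γ) ^ p - μ₂ ^ p) := by
    apply tsum_nonneg
    intro k
    have h := aux_key_gt p γ hp0 n (k+1+n) μ₂ hμ₂0 hμ₂b (by omega)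
    have h' : μ₂ ^ p < (((k+1+n:ℕ):ℝ) + 1 + γ) ^ p := by exact_mod_cast h
    exact div_nonneg hp0.le (by linarith)
  rw [htail_eq]
  linarith
set_option maxHeartbeats 800000 in
lemma aux_perturbed (p γ : ℝ) (hp1 : 1 < p) (hγ0 : -3/4 < γ) (hγ1 : γ < -1/2)
    (g : ℝ → ℝ)
    (hg : ∀ μ, g μ = ∑' k : ℕ, p / (((k : ℝ) + 1 + γ) ^ p - μ ^ p))
    (n : ℕ) (hn : 1 ≤ n) :
    StrictMonoOn g (Ioo ((n : ℝ) + γ) ((n : ℝ) + 1 + γ)) ∧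
    (∀ μ ∈ Ioo ((n : ℝ) + γ) ((n : ℝ) + 1 + γ),
      HasDerivAt g
        (∑' k : ℕ, p ^ 2 * μ ^ (p - 1) / ((((k : ℝ) + 1 + γ) ^ p - μ ^ p) ^ 2)) μ) ∧
    (∃! μ, μ ∈ Ioo ((n : ℝ) + γ) ((n : ℝ) + 1 + γ) ∧ g μ = 0) := by
  have hp0 : (0:ℝ) < p := by linarith
  have hn1 : (1:ℝ) ≤ (n:ℝ) := by exact_mod_cast hn
  have ha0 : (0:ℝ) < (n:ℝ) + γ := by linarith
  have hab : (n:ℝ) + γ < (n:ℝ) + 1 + γ := by linarith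
  have hDeriv : ∀ μ ∈ Ioo ((n:ℝ) + γ) ((n:ℝ) + 1 + γ),
      HasDerivAt g
        (∑' k : ℕ, p ^ 2 * μ ^ (p - 1) / ((((k : ℝ) + 1 + γ) ^ p - μ ^ p) ^ 2)) μ := by
    intro μ hμ
    exact (aux_hasDeriv p γ hp1 hγ0 hγ1 n hn μ hμ).congr_of_eventuallyEq
      (Eventually.of_forall fun x => hg x)
  have hcont : ContinuousOn g (Ioo ((n:ℝ) + γ) ((n:ℝ) + 1 + γ)) := fun x hx =>
    ((hDeriv x hx).continuousAt).continuousWithinAt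
  have hmono : StrictMonoOn g (Ioo ((n:ℝ) + γ) ((n:ℝ) + 1 + γ)) := by
    apply strictMonoOn_of_deriv_pos (convex_Ioo _ _) hcont
    intro x hx
    rw [interior_Ioo] at hx
    rw [(hDeriv x hx).deriv]
    have hx0 : 0 < x := lt_trans ha0 hx.1
    refine Summable.tsum_pos (aux_summD p γ hp1 hγ0 (x^p) (p^2 * x^(p-1))) ?_ 0 ?_
    · intro k
      exact div_nonneg (mul_nonneg (by positivity) (Real.rpow_nonneg hx0.le _)) (sq_nonneg _)
    · have hlt : (((0:ℕ):ℝ) + 1 + γ) ^ p < x ^ p := aux_key_lt p γ hp0 hγ0 n 0 x hx.1 hn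
      have hne : (((0:ℕ):ℝ) + 1 + γ) ^ p - x ^ p ≠ 0 := sub_ne_zero.2 (ne_of_lt hlt)
      have hsq : 0 < ((((0:ℕ):ℝ) + 1 + γ) ^ p - x ^ p) ^ 2 :=
        lt_of_le_of_ne (sq_nonneg _) (Ne.symm (pow_ne_zero 2 hne))
      exact div_pos (mul_pos (pow_pos hp0 2) (Real.rpow_pos_of_pos hx0 _)) hsq
  have hroot : ∃! μ, μ ∈ Ioo ((n:ℝ) + γ) ((n:ℝ) + 1 + γ) ∧ g μ = 0 := by
    obtain ⟨μ₁, ⟨hμ₁a, hμ₁m⟩, hgμ₁'⟩ := aux_neg_point p γ hp1 hγ0 hγ1 n hn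
    obtain ⟨μ₂, ⟨hμ₂m, hμ₂b⟩, hgμ₂'⟩ := aux_pos_point p γ hp1 hγ0 hγ1 n hn
    have hgμ₁ : g μ₁ < 0 := by rw [hg μ₁]; exact hgμ₁'
    have hgμ₂ : 0 < g μ₂ := by rw [hg μ₂]; exact hgμ₂'
    have hμ₁₂ : μ₁ < μ₂ := lt_trans hμ₁m hμ₂m
    have hμ₂bb : μ₂ < (n:ℝ) + 1 + γ := hμ₂b
    have hsub : Icc μ₁ μ₂ ⊆ Ioo ((n:ℝ) + γ) ((n:ℝ) + 1 + γ) := fun x hx =>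
      ⟨lt_of_lt_of_le hμ₁a hx.1, lt_of_le_of_lt hx.2 hμ₂bb⟩
    have hcont' : ContinuousOn g (Icc μ₁ μ₂) := hcont.mono hsub
    have h0mem : (0:ℝ) ∈ Icc (g μ₁) (g μ₂) := ⟨hgμ₁.le, hgμ₂.le⟩
    obtain ⟨x, hxmem, hgx⟩ := intermediate_value_Icc hμ₁₂.le hcont' h0mem
    refine ⟨x, ⟨hsub hxmem, hgx⟩, ?_⟩
    rintro y ⟨hy, hgy⟩
    exact hmono.injOn hy (hsub hxmem) (by rw [hgy, hgx])
  exact ⟨hmono, hDeriv, hroot⟩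

theorem perturbed_eq_monotone_root (H γ : ℝ)
    (hH : H ∈ Set.Ioo (0:ℝ) 1) (hγ : γ ∈ Set.Ioo (-3/4 : ℝ) (-1/2))
    (g : ℝ → ℝ)
    (hg : ∀ μ, g μ = ∑' k : ℕ, (2*H+1) / (((k : ℝ) + 1 + γ) ^ (2*H+1) - μ ^ (2*H+1)))
    (n : ℕ) (hn : 1 ≤ n) :
    StrictMonoOn g (Ioo ((n : ℝ) + γ) ((n : ℝ) + 1 + γ)) ∧
    (∀ μ ∈ Ioo ((n : ℝ) + γ) ((n : ℝ) + 1 + γ),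
      HasDerivAt g
        (∑' k : ℕ, (2*H+1) ^ 2 * μ ^ (2*H) /
          ((((k : ℝ) + 1 + γ) ^ (2*H+1) - μ ^ (2*H+1)) ^ 2)) μ) ∧
    (∃! μ, μ ∈ Ioo ((n : ℝ) + γ) ((n : ℝ) + 1 + γ) ∧ g μ = 0) := by
  obtain ⟨hH0, hH1⟩ := hH
  obtain ⟨hγ0, hγ1⟩ := hγ
  obtain ⟨m1, m2, m3⟩ := aux_perturbed (2*H+1) γ (by linarith) hγ0 hγ1 g hg n hn
  refine ⟨m1, ?_, m3⟩
  intro μ hμ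
  have h := m2 μ hμ
  have he : 2*H+1 - 1 = 2*H := by ring
  rw [he] at h
  exact h
end

section
/- For any μ ≥ 1 and H ∈ (0,1), the bound ∫₀^∞ 2e^{−2πt} / |(it/μ)^{2H+1} − 1| dt ≤ C holds for a constant C independent of μ, and the integral converges to 1/π as μ → ∞. -/
open Real MeasureTheory Filter Topology

section aux

lemma key_lb (H : ℝ) (hH : H ∈ Set.Ioo (0:ℝ) 1) {s : ℝ} (hs : 0 ≤ s) :
    1 ≤ ‖((s:ℂ) * Complex.I) ^ ((2*H+1 : ℝ) : ℂ) - 1‖ := by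
  have hc0 : ((2*H+1 : ℝ) : ℂ) ≠ 0 := by
    norm_cast; nlinarith [hH.1, hH.2]
  rcases eq_or_lt_of_le hs with h | h
  · rw [← h]
    rw [show ((0:ℝ):ℂ) * Complex.I = 0 by simp, Complex.zero_cpow hc0]
    simp
  · have hz : (s:ℂ) * Complex.I ≠ 0 := by
      simp [Complex.ext_iff, h.ne']
    have harg : Complex.arg ((s:ℂ) * Complex.I) = π / 2 := by
      rw [Complex.arg_real_mul _ h, Complex.arg_I]
    have hre : (((s:ℂ) * Complex.I) ^ ((2*H+1 : ℝ) : ℂ)).re ≤ 0 := by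
      rw [Complex.cpow_def_of_ne_zero hz, Complex.exp_re]
      have him : (Complex.log ((s:ℂ) * Complex.I) * ((2*H+1 : ℝ) : ℂ)).im
          = π / 2 * (2*H+1) := by
        simp [Complex.mul_im, Complex.log_im, harg]
      rw [him]
      have hcos : Real.cos (π / 2 * (2*H+1)) < 0 := by
        apply Real.cos_neg_of_pi_div_two_lt_of_lt
        · nlinarith [Real.pi_pos, hH.1]
        · nlinarith [Real.pi_pos, hH.2]
      nlinarith [Real.exp_pos (Complex.log ((s:ℂ) * Complex.I) * ((2*H+1 : ℝ) : ℂ)).re,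
        hcos]
    calc (1:ℝ) ≤ |((((s:ℂ) * Complex.I) ^ ((2*H+1 : ℝ) : ℂ) - 1)).re| := by
          rw [Complex.sub_re, Complex.one_re, abs_sub_comm,
            abs_of_nonneg (by linarith)]
          linarith
      _ ≤ _ := Complex.abs_re_le_norm _

lemma integral_val : ∫ t in Set.Ioi (0:ℝ), 2 * Real.exp (-2 * π * t) = 1 / π := by
  have hderiv : ∀ x ∈ Set.Ici (0:ℝ),
      HasDerivAt (fun x : ℝ => -Real.exp (-2 * π * x) / π) (2 * Real.exp (-2 * π * x)) x := by
    intro x _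
    have h1 : HasDerivAt (fun x : ℝ => -2 * π * x) (-2 * π) x := by
      simpa using (hasDerivAt_id x).const_mul (-2 * π)
    have h2 := (h1.exp).neg.div_const π
    apply h2.congr_deriv
    field_simp
  have hint : IntegrableOn (fun x : ℝ => 2 * Real.exp (-2 * π * x)) (Set.Ioi 0) := by
    have := (exp_neg_integrableOn_Ioi 0 (b := 2 * π) (by positivity)).const_mul 2
    simpa [neg_mul, IntegrableOn] using this
  have htend : Tendsto (fun x : ℝ => -Real.exp (-2 * π * x) / π) atTop (𝓝 0) := by
    have h0 : Tendsto (fun x : ℝ => 2 * π * x) atTop atTop := by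
      exact Tendsto.const_mul_atTop (by positivity) tendsto_id
    have h3 : Tendsto (fun x : ℝ => Real.exp (-2 * π * x)) atTop (𝓝 0) := by
      simpa [neg_mul] using h0
    simpa using (h3.neg.div_const π)
  have := MeasureTheory.integral_Ioi_of_hasDerivAt_of_tendsto' hderiv hint htend
  rw [this]
  simp only [mul_zero, Real.exp_zero]
  ring

lemma integrable_bound : IntegrableOn (fun t : ℝ => 2 * Real.exp (-2 * π * t)) (Set.Ioi 0) := by
  have := (exp_neg_integrableOn_Ioi 0 (b := 2 * π) (by positivity)).const_mul 2
  simpa [neg_mul, IntegrableOn] using this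

end aux

theorem residual_integral_bound (H : ℝ) (hH : H ∈ Set.Ioo (0:ℝ) 1) :
    (∃ C : ℝ, ∀ μ : ℝ, 1 ≤ μ →
      ∫ t in Set.Ioi (0:ℝ),
        2 * Real.exp (-2 * π * t) /
          ‖(Complex.I * (t : ℂ) / (μ : ℂ)) ^ ((2*H+1 : ℝ) : ℂ) - 1‖ ≤ C) ∧
    Tendsto (fun μ : ℝ =>
      ∫ t in Set.Ioi (0:ℝ),
        2 * Real.exp (-2 * π * t) /
          ‖(Complex.I * (t : ℂ) / (μ : ℂ)) ^ ((2*H+1 : ℝ) : ℂ) - 1‖)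
      atTop (nhds (1 / π)) := by
  set c : ℂ := ((2*H+1 : ℝ) : ℂ) with hc
  set f : ℝ → ℝ → ℝ := fun μ t =>
    2 * Real.exp (-2 * π * t) /
      ‖(Complex.I * (t : ℂ) / (μ : ℂ)) ^ c - 1‖ with hf
  have hbase : ∀ (μ t : ℝ), Complex.I * (t : ℂ) / (μ : ℂ)
      = ((t / μ : ℝ) : ℂ) * Complex.I := by
    intro μ t
    push_cast
    ring
  have hlb : ∀ (μ t : ℝ), 1 ≤ μ → 0 ≤ t →
      1 ≤ ‖(Complex.I * (t : ℂ) / (μ : ℂ)) ^ c - 1‖ := by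
    intro μ t hμ ht
    rw [hbase μ t]
    exact key_lb H hH (by positivity)
  have hbound : ∀ (μ : ℝ), 1 ≤ μ → ∀ t ∈ Set.Ioi (0:ℝ),
      ‖f μ t‖ ≤ 2 * Real.exp (-2 * π * t) := by
    intro μ hμ t ht
    have h1 := hlb μ t hμ (le_of_lt ht)
    have hnum : (0:ℝ) ≤ 2 * Real.exp (-2 * π * t) := by positivity
    rw [Real.norm_eq_abs, abs_of_nonneg (by positivity)]
    calc f μ t ≤ 2 * Real.exp (-2 * π * t) / 1 :=
          div_le_div_of_nonneg_left hnum one_pos h1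
      _ = 2 * Real.exp (-2 * π * t) := div_one _
  have hmeas : ∀ μ : ℝ, AEStronglyMeasurable (f μ) (volume.restrict (Set.Ioi 0)) := by
    intro μ
    apply Measurable.aestronglyMeasurable
    apply Measurable.div (by fun_prop)
    exact continuous_norm.measurable.comp
      ((Measurable.pow (by fun_prop) measurable_const).sub measurable_const)
  have hint : ∀ μ : ℝ, 1 ≤ μ → IntegrableOn (f μ) (Set.Ioi 0) := by
    intro μ hμ
    apply Integrable.mono integrable_bound (hmeas μ)
    rw [ae_restrict_iff' measurableSet_Ioi]
    filter_upwards with t ht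
    calc ‖f μ t‖ ≤ 2 * Real.exp (-2 * π * t) := hbound μ hμ t ht
      _ ≤ ‖2 * Real.exp (-2 * π * t)‖ := le_abs_self _
  constructor
  · refine ⟨1 / π, fun μ hμ => ?_⟩
    rw [← integral_val]
    apply setIntegral_mono_on (hint μ hμ) integrable_bound measurableSet_Ioi
    intro t ht
    calc f μ t ≤ ‖f μ t‖ := le_abs_self _
      _ ≤ 2 * Real.exp (-2 * π * t) := hbound μ hμ t ht
  · rw [← integral_val]
    apply MeasureTheory.tendsto_integral_filter_of_dominated_convergence
      (fun t => 2 * Real.exp (-2 * π * t))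
    · filter_upwards with μ using hmeas μ
    · filter_upwards [eventually_ge_atTop (1:ℝ)] with μ hμ
      rw [ae_restrict_iff' measurableSet_Ioi]
      filter_upwards with t ht using hbound μ hμ t ht
    · exact integrable_bound
    · rw [ae_restrict_iff' measurableSet_Ioi]
      filter_upwards with t ht
      have habs : Tendsto (fun μ : ℝ =>
          ‖(Complex.I * (t : ℂ) / (μ : ℂ)) ^ c - 1‖) atTop (𝓝 1) := by
        have hA : Tendsto (fun μ : ℝ => (Complex.I * (t : ℂ) / (μ : ℂ)) ^ c)
            atTop (𝓝 0) := by
          rw [tendsto_zero_iff_norm_tendsto_zero]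
          have heq : ∀ᶠ μ : ℝ in atTop,
              ‖(Complex.I * (t : ℂ) / (μ : ℂ)) ^ c‖ = (t / μ) ^ (2*H+1 : ℝ) := by
            filter_upwards [eventually_ge_atTop (1:ℝ)] with μ hμ
            have hμ0 : (0:ℝ) < μ := by linarith
            have ht0 : (0:ℝ) < t := ht
            rw [hbase μ t, hc, Complex.norm_cpow_real]
            congr 1
            rw [norm_mul, Complex.norm_I, Complex.norm_real, Real.norm_eq_abs,
              abs_of_nonneg (by positivity)]
            ring
          rw [tendsto_congr' heq]
          have h1 : Tendsto (fun μ : ℝ => t / μ) atTop (𝓝 0) :=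
            tendsto_const_nhds.div_atTop tendsto_id
          have h2 : ContinuousAt (fun s : ℝ => s ^ (2*H+1 : ℝ)) 0 :=
            Real.continuousAt_rpow_const 0 _ (Or.inr (by nlinarith [hH.1, hH.2]))
          have := h2.tendsto.comp h1
          simpa [Real.zero_rpow (show (2*H+1 : ℝ) ≠ 0 by nlinarith [hH.1, hH.2]),
            Function.comp_def] using this
        have := ((hA.sub_const 1).norm)
        simpa using this
      have := (tendsto_const_nhds (x := 2 * Real.exp (-2 * π * t))
        (f := Filter.atTop (α := ℝ))).div habs one_ne_zero
      simpa [Pi.div_def] using this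
end

section
/- For H ∈ (0,1) and n → ∞, ∑_{k=1}^{n} (1/k) / ((n + a)^{2H+1} − (k + b)^{2H+1}) = O(n^{−2H−1} log n), for any fixed constants a > b ≥ −1 with b > −1 such that the denominators are positive for 1 ≤ k ≤ n. -/
open Real Filter Asymptotics Finset

lemma sum_inv_Icc_le (n : ℕ) : ∑ k ∈ Finset.Icc 1 n, (1/(k:ℝ)) ≤ 1 + Real.log n := by
  have h := harmonic_le_one_add_log n
  have : ((harmonic n : ℚ) : ℝ) = ∑ k ∈ Finset.Icc 1 n, (1/(k:ℝ)) := by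
    rw [harmonic_eq_sum_Icc]
    push_cast
    simp [one_div]
  linarith [this ▸ h]

lemma sum_shift_le (c : ℝ) (hc : 0 < c) (n : ℕ) :
    ∑ k ∈ Finset.Icc 1 n, 1/((n:ℝ) - k + c) ≤ 1/c + (1 + Real.log n) := by
  have h1 : ∑ k ∈ Finset.Icc 1 n, 1/((n:ℝ) - k + c)
      = ∑ j ∈ Finset.range n, 1/((j:ℝ) + c) := by
    rw [← Finset.Ico_add_one_right_eq_Icc, Finset.sum_Ico_eq_sum_range]
    rw [← Finset.sum_range_reflect]
    refine Finset.sum_congr rfl fun j hj => ?_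
    rw [Finset.mem_range] at hj
    congr 1
    have h : 1 + (n + 1 - 1 - 1 - j) = n - j := by omega
    rw [h, Nat.cast_sub hj.le]
    ring
  rw [h1]
  rcases Nat.eq_zero_or_pos n with rfl | hn
  · simp
    positivity
  · obtain ⟨m, rfl⟩ : ∃ m, n = m + 1 := ⟨n - 1, by omega⟩
    rw [Finset.sum_range_succ']
    simp only [Nat.cast_zero, zero_add]
    have h2 : ∑ i ∈ Finset.range m, 1/(((i+1:ℕ):ℝ) + c) ≤ 1 + Real.log (m+1:ℕ) := by
      calc ∑ i ∈ Finset.range m, 1/(((i+1:ℕ):ℝ) + c)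
          ≤ ∑ i ∈ Finset.range m, 1/(((i+1:ℕ):ℝ)) := by
            refine Finset.sum_le_sum fun i _ => ?_
            apply one_div_le_one_div_of_le (by positivity)
            linarith [hc.le]
        _ = ∑ k ∈ Finset.Icc 1 m, (1/(k:ℝ)) := by
            rw [← Finset.Ico_add_one_right_eq_Icc, Finset.sum_Ico_eq_sum_range]
            simp [add_comm]
        _ ≤ 1 + Real.log m := sum_inv_Icc_le m
        _ ≤ 1 + Real.log (m+1:ℕ) := by
            rcases Nat.eq_zero_or_pos m with rfl | hm
            · simp
            · have := Real.log_le_log (by positivity : (0:ℝ) < m) (by push_cast; linarith : (m:ℝ) ≤ ((m+1:ℕ):ℝ))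
              linarith
    push_cast at h2 ⊢
    linarith

theorem An_estimate (H a b : ℝ) (hH : H ∈ Set.Ioo (0:ℝ) 1)
    (hab : b < a) (hb : -1 < b) :
    (fun n : ℕ => ∑ k ∈ Finset.Icc 1 n,
        (1 / (k : ℝ)) / (((n : ℝ) + a) ^ (2*H+1) - ((k : ℝ) + b) ^ (2*H+1)))
      =O[atTop] (fun n : ℕ => (n : ℝ) ^ (-2*H-1) * Real.log n) := by
  obtain ⟨hH0, hH1⟩ := hH
  have hc0 : (0:ℝ) < a - b := by linarith
  have ha1 : -1 < a := lt_trans hb hab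
  rw [isBigO_iff]
  refine ⟨(2:ℝ)^(2*H) * (4 + 1/(a-b)), ?_⟩
  filter_upwards [eventually_ge_atTop 3] with n hn
  have hn3 : (3:ℝ) ≤ n := by exact_mod_cast hn
  have hn0 : (0:ℝ) < n := by linarith
  have hx : (0:ℝ) < (n:ℝ) + a := by linarith
  have hlog1 : 1 ≤ Real.log n := by
    have h3 : Real.exp 1 ≤ 3 := by
      have := Real.exp_one_lt_d9
      linarith
    calc (1:ℝ) = Real.log (Real.exp 1) := (Real.log_exp 1).symm
      _ ≤ Real.log n := Real.log_le_log (Real.exp_pos 1) (le_trans h3 hn3)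
  have hxpow : (0:ℝ) < ((n:ℝ)+a) ^ (2*H) := Real.rpow_pos_of_pos hx _
  have hterm : ∀ k ∈ Finset.Icc 1 n,
      (1 / (k : ℝ)) / (((n:ℝ)+a) ^ (2*H+1) - ((k : ℝ) + b) ^ (2*H+1))
        ≤ (((n:ℝ)+a)^(2*H))⁻¹ * (((n:ℝ)+(a-b))⁻¹ * (1/(k:ℝ) + 1/((n:ℝ)-(k:ℝ)+(a-b)))) := by
    intro k hk
    rw [Finset.mem_Icc] at hk
    have hk1 : (1:ℝ) ≤ k := by exact_mod_cast hk.1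
    have hkn : (k:ℝ) ≤ n := by exact_mod_cast hk.2
    have hkb : 0 < (k:ℝ) + b := by linarith
    have hkx : (k:ℝ) + b ≤ (n:ℝ)+a := by linarith
    have hgap : 0 < (n:ℝ) - k + (a-b) := by linarith
    have hkey : ((k:ℝ)+b)^(2*H+1) ≤ ((n:ℝ)+a)^(2*H) * ((k:ℝ)+b) := by
      rw [Real.rpow_add hkb, Real.rpow_one]
      gcongr <;> linarith
    have hD' : ((n:ℝ)+a)^(2*H+1) = ((n:ℝ)+a)^(2*H) * ((n:ℝ)+a) := by
      rw [Real.rpow_add hx, Real.rpow_one]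
    have hDlb : ((n:ℝ)+a)^(2*H) * ((n:ℝ) - k + (a-b))
        ≤ ((n:ℝ)+a)^(2*H+1) - ((k:ℝ)+b)^(2*H+1) := by
      rw [hD']
      nlinarith [hkey]
    have hDpos : 0 < ((n:ℝ)+a)^(2*H) * ((n:ℝ) - k + (a-b)) := by positivity
    calc (1 / (k : ℝ)) / (((n:ℝ)+a) ^ (2*H+1) - ((k : ℝ) + b) ^ (2*H+1))
        ≤ (1 / (k:ℝ)) / (((n:ℝ)+a)^(2*H) * ((n:ℝ) - k + (a-b))) :=
          div_le_div_of_nonneg_left (by positivity) hDpos hDlb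
      _ = (((n:ℝ)+a)^(2*H))⁻¹ * (((n:ℝ)+(a-b))⁻¹ * (1/(k:ℝ) + 1/((n:ℝ)-(k:ℝ)+(a-b)))) := by
          have hk0 : (k:ℝ) ≠ 0 := by linarith
          have h1 : (n:ℝ) - k + (a-b) ≠ 0 := ne_of_gt hgap
          have h2 : (n:ℝ) + (a-b) ≠ 0 := by positivity
          field_simp
          ring
  have hsum : ∑ k ∈ Finset.Icc 1 n,
        (1 / (k : ℝ)) / (((n:ℝ)+a) ^ (2*H+1) - ((k : ℝ) + b) ^ (2*H+1))
      ≤ (((n:ℝ)+a)^(2*H))⁻¹ * (((n:ℝ)+(a-b))⁻¹ *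
          ((1 + Real.log n) + (1/(a-b) + (1 + Real.log n)))) := by
    calc ∑ k ∈ Finset.Icc 1 n,
          (1 / (k : ℝ)) / (((n:ℝ)+a) ^ (2*H+1) - ((k : ℝ) + b) ^ (2*H+1))
        ≤ ∑ k ∈ Finset.Icc 1 n, (((n:ℝ)+a)^(2*H))⁻¹ *
            (((n:ℝ)+(a-b))⁻¹ * (1/(k:ℝ) + 1/((n:ℝ)-(k:ℝ)+(a-b)))) :=
          Finset.sum_le_sum hterm
      _ = (((n:ℝ)+a)^(2*H))⁻¹ * (((n:ℝ)+(a-b))⁻¹ *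
            ((∑ k ∈ Finset.Icc 1 n, 1/(k:ℝ)) +
             ∑ k ∈ Finset.Icc 1 n, 1/((n:ℝ)-(k:ℝ)+(a-b)))) := by
          rw [← Finset.sum_add_distrib, ← Finset.mul_sum, ← Finset.mul_sum]
      _ ≤ _ := by
          gcongr <;> first
            | exact inv_nonneg.2 hxpow.le
            | exact inv_nonneg.2 (by linarith)
            | exact sum_inv_Icc_le n
            | exact sum_shift_le (a-b) hc0 n
  have hfn : 0 ≤ ∑ k ∈ Finset.Icc 1 n,
      (1 / (k : ℝ)) / (((n:ℝ)+a) ^ (2*H+1) - ((k : ℝ) + b) ^ (2*H+1)) := by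
    refine Finset.sum_nonneg fun k hk => ?_
    rw [Finset.mem_Icc] at hk
    have hk1 : (1:ℝ) ≤ k := by exact_mod_cast hk.1
    have hkn : (k:ℝ) ≤ n := by exact_mod_cast hk.2
    have hkb : 0 < (k:ℝ) + b := by linarith
    have hkey : ((k:ℝ)+b)^(2*H+1) < ((n:ℝ)+a)^(2*H+1) :=
      Real.rpow_lt_rpow hkb.le (by linarith) (by linarith)
    have : 0 < ((n:ℝ)+a)^(2*H+1) - ((k:ℝ)+b)^(2*H+1) := by linarith
    positivity
  have hinv : ((((n:ℝ)+a))^(2*H))⁻¹ ≤ (2:ℝ)^(2*H) * (n:ℝ)^(-(2*H)) := by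
    have hxlb : (n:ℝ)/2 ≤ (n:ℝ) + a := by linarith
    have h2 : (0:ℝ) < ((n:ℝ)/2)^(2*H) := Real.rpow_pos_of_pos (by linarith) _
    have hxpow_lb : ((n:ℝ)/2)^(2*H) ≤ ((n:ℝ)+a)^(2*H) :=
      Real.rpow_le_rpow (by positivity) hxlb (by linarith)
    have h1 : ((n:ℝ)/2)^(2*H) = (n:ℝ)^(2*H) / (2:ℝ)^(2*H) :=
      Real.div_rpow hn0.le (by norm_num : (0:ℝ) ≤ 2) (2*H)
    rw [Real.rpow_neg hn0.le]
    calc ((((n:ℝ)+a))^(2*H))⁻¹ ≤ (((n:ℝ)/2)^(2*H))⁻¹ := by gcongr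
      _ = (2:ℝ)^(2*H) * ((n:ℝ)^(2*H))⁻¹ := by
          rw [h1, inv_div, div_eq_mul_inv]
  have hninv : ((n:ℝ)+(a-b))⁻¹ ≤ (n:ℝ)⁻¹ := by
    gcongr
    linarith
  have hbr : (1 + Real.log n) + (1/(a-b) + (1 + Real.log n))
      ≤ (4 + 1/(a-b)) * Real.log n := by
    have h1 : 1/(a-b) ≤ (1/(a-b)) * Real.log n := by
      nlinarith [one_div_pos.2 hc0]
    nlinarith
  have hchain : ∑ k ∈ Finset.Icc 1 n,
        (1 / (k : ℝ)) / (((n:ℝ)+a) ^ (2*H+1) - ((k : ℝ) + b) ^ (2*H+1))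
      ≤ ((2:ℝ)^(2*H) * (n:ℝ)^(-(2*H))) * ((n:ℝ)⁻¹ * ((4 + 1/(a-b)) * Real.log n)) := by
    refine hsum.trans ?_
    have hbr0 : 0 ≤ (1 + Real.log n) + (1/(a-b) + (1 + Real.log n)) := by positivity
    gcongr <;> first
      | exact inv_nonneg.2 hxpow.le
      | exact inv_nonneg.2 (by linarith)
      | exact hinv
      | exact hninv
      | exact hbr
      | positivity
      | linarith
  have hpow : (n:ℝ)^(-2*H-1) = (n:ℝ)^(-(2*H)) * (n:ℝ)⁻¹ := by
    rw [show -2*H-1 = (-(2*H)) + (-1) by ring, Real.rpow_add hn0, Real.rpow_neg_one]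
  have hg : 0 ≤ (n:ℝ)^(-2*H-1) * Real.log n :=
    mul_nonneg (Real.rpow_nonneg hn0.le _) (by linarith)
  simp only [Real.norm_eq_abs]
  rw [abs_of_nonneg hfn, abs_of_nonneg hg]
  calc _ ≤ ((2:ℝ)^(2*H) * (n:ℝ)^(-(2*H))) * ((n:ℝ)⁻¹ * ((4 + 1/(a-b)) * Real.log n)) :=
        hchain
    _ = (2:ℝ)^(2*H) * (4 + 1/(a-b)) * ((n:ℝ)^(-2*H-1) * Real.log n) := by
        rw [hpow]; ring
end

section
/- For H ∈ (0,1) and fixed reals a > b with k + b > 0 for k ≥ 1, the tail sum ∑_{k=n+1}^∞ k^{2H−1} / ((k + b)^{2H+1} − (n + a)^{2H+1})² = O(n^{−2H−1}) as n → ∞, provided k + b > n + a for all k ≥ n+1 and n large. -/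
open Real Filter Asymptotics

-- Bernoulli / MVT type inequality for rpow
lemma mvt_rpow {x y p : ℝ} (hy : 0 < y) (hxy : y ≤ x) (hp : 1 ≤ p) :
    p * y ^ (p - 1) * (x - y) ≤ x ^ p - y ^ p := by
  have hs : (-1 : ℝ) ≤ (x - y) / y := by
    have : 0 ≤ (x - y) / y := div_nonneg (by linarith) hy.le
    linarith
  have hB := one_add_mul_self_le_rpow_one_add hs hp
  have hxy' : (1 + (x - y) / y) = x / y := by field_simp; ring
  rw [hxy'] at hB
  have hBmul := mul_le_mul_of_nonneg_right hB (Real.rpow_nonneg hy.le p)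
  rw [Real.div_rpow (by linarith) hy.le, div_mul_cancel₀] at hBmul
  · have h1 : (1 + p * ((x - y) / y)) * y ^ p
        = y ^ p + p * (y ^ p / y) * (x - y) := by ring
    have h2 : y ^ p / y = y ^ (p - 1) := by
      rw [Real.rpow_sub hy, Real.rpow_one]
    rw [h1, h2] at hBmul
    linarith
  · exact (Real.rpow_pos_of_pos hy p).ne'

set_option maxHeartbeats 1000000 in
theorem Qn_estimate (H a b : ℝ) (hH : H ∈ Set.Ioo (0:ℝ) 1)
    (hab : b < a) (hb : ∀ k : ℕ, 1 ≤ k → 0 < (k : ℝ) + b)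
    (ha : a < b + 1) :
    (fun n : ℕ => ∑' j : ℕ,
        ((n : ℝ) + 1 + j) ^ (2*H-1) /
          ((((n : ℝ) + 1 + j + b) ^ (2*H+1) - ((n : ℝ) + a) ^ (2*H+1)) ^ 2))
      =O[atTop] (fun n : ℕ => (n : ℝ) ^ (-2*H-1)) := by
  obtain ⟨hH0, hH1⟩ := hH
  set c : ℝ := 1 + b - a with hc_def
  have hc : 0 < c := by rw [hc_def]; linarith
  set m : ℝ := max (2*H - 1) 0 with hm_def
  have hm0 : 0 ≤ m := le_max_right _ _
  have hm1 : m < 1 := by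
    apply max_lt <;> linarith
  set d : ℝ := min c 1 with hd_def
  have hd : 0 < d := lt_min hc one_pos
  -- summability of the universal series
  have hjc : ∀ j : ℕ, 0 < (j : ℝ) + c := fun j => by positivity
  have hjd : ∀ j : ℕ, d * (1 + (j:ℝ)) ≤ (j : ℝ) + c := by
    intro j
    rcases le_or_gt c 1 with h | h
    · have hdc : d = c := min_eq_left h
      rw [hdc]
      nlinarith [Nat.cast_nonneg (α := ℝ) j]
    · have hdc : d = 1 := min_eq_right h.le
      rw [hdc]; nlinarith
  have hS : Summable (fun j : ℕ => (1 + (j:ℝ)) ^ m / ((j:ℝ) + c) ^ 2) := by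
    have hmaj : Summable (fun j : ℕ => d⁻¹ ^ 2 * (1 + (j:ℝ)) ^ (m - 2)) := by
      apply Summable.mul_left
      have := (Real.summable_nat_rpow (p := m - 2)).2 (by linarith)
      have h' := (summable_nat_add_iff (f := fun n : ℕ => (n : ℝ) ^ (m - 2)) 1).2 this
      refine h'.congr fun j => ?_
      push_cast
      ring_nf
    apply Summable.of_nonneg_of_le (fun j => by positivity) _ hmaj
    intro j
    have h1j : (0:ℝ) < 1 + j := by positivity
    have h1j1 : (1:ℝ) ≤ 1 + j := by simp [Nat.cast_nonneg]
    have hle : (d * (1 + (j:ℝ))) ^ 2 ≤ ((j:ℝ) + c) ^ 2 := by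
      apply pow_le_pow_left₀ (by positivity) (hjd j)
    calc (1 + (j:ℝ)) ^ m / ((j:ℝ) + c) ^ 2
        ≤ (1 + (j:ℝ)) ^ m / (d * (1 + (j:ℝ))) ^ 2 := by
          apply div_le_div_of_nonneg_left (Real.rpow_nonneg h1j.le m) (by positivity) hle
      _ = d⁻¹ ^ 2 * (1 + (j:ℝ)) ^ (m - 2) := by
          rw [Real.rpow_sub h1j, mul_pow]
          rw [show (1 + (j:ℝ)) ^ (2:ℝ) = (1 + (j:ℝ)) ^ (2:ℕ) by
            rw [← Real.rpow_natCast]; norm_num]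
          field_simp
  set S : ℝ := ∑' j : ℕ, (1 + (j:ℝ)) ^ m / ((j:ℝ) + c) ^ 2 with hS_def
  have hS0 : 0 ≤ S := tsum_nonneg fun j => by positivity
  set p : ℝ := 2*H + 1 with hp_def
  have hp1 : 1 < p := by rw [hp_def]; linarith
  have hp0 : 0 < p := by linarith
  clear_value c m d S p
  rw [isBigO_iff]
  refine ⟨(32 / p ^ 2) * S, ?_⟩
  have hev : ∀ᶠ n : ℕ in atTop, (2 * |a| + 2 : ℝ) ≤ n :=
    tendsto_natCast_atTop_atTop.eventually_ge_atTop _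
  filter_upwards [hev] with n hn
  have hn2 : (2:ℝ) ≤ n := by
    have := abs_nonneg a; linarith
  have hn0 : (0:ℝ) < n := by linarith
  have hy : (0:ℝ) < (n:ℝ) + a := by
    have := neg_abs_le a; linarith
  have hyn : (n:ℝ) / 2 ≤ (n:ℝ) + a := by
    have := neg_abs_le a; linarith
  set y : ℝ := (n:ℝ) + a with hy_def
  clear_value y
  -- per-term bound
  have key : ∀ j : ℕ,
      ((n : ℝ) + 1 + j) ^ (2*H-1) /
          ((((n : ℝ) + 1 + j + b) ^ p - y ^ p) ^ 2)
      ≤ ((32 / p ^ 2) * (n:ℝ) ^ (-2*H-1)) * ((1 + (j:ℝ)) ^ m / ((j:ℝ) + c) ^ 2) := by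
    intro j
    have hx0 : (0:ℝ) < (n:ℝ) + 1 + j := by positivity
    set x : ℝ := (n:ℝ) + 1 + j + b with hx_def
    clear_value x
    have hsub : x - y = (j:ℝ) + c := by rw [hx_def, hy_def, hc_def]; ring
    have hxy : y ≤ x := by nlinarith [hjc j]
    -- denominator lower bound
    have hden : p * y ^ (2*H) * ((j:ℝ) + c) ≤ x ^ p - y ^ p := by
      have := mvt_rpow hy hxy hp1.le
      rw [hsub] at this
      have h2H : p - 1 = 2*H := by rw [hp_def]; ring
      rwa [h2H] at this
    have hdenpos : 0 < p * y ^ (2*H) * ((j:ℝ) + c) := by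
      have := Real.rpow_pos_of_pos hy (2*H)
      positivity
    -- numerator upper bound
    have hnum : ((n : ℝ) + 1 + j) ^ (2*H-1) ≤ ((n:ℝ) + 1) ^ (2*H-1) * (1 + (j:ℝ)) ^ m := by
      rcases le_or_gt 0 (2*H - 1) with h | h
      · have hm_eq : m = 2*H - 1 := by rw [hm_def]; exact max_eq_left h
        rw [hm_eq, ← Real.mul_rpow (by positivity) (by positivity)]
        apply Real.rpow_le_rpow hx0.le _ h
        nlinarith [Nat.cast_nonneg (α := ℝ) j, hn0]
      · have hm_eq : m = 0 := by rw [hm_def]; exact max_eq_right h.le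
        rw [hm_eq, Real.rpow_zero, mul_one]
        apply Real.rpow_le_rpow_of_nonpos (by positivity) (by linarith [Nat.cast_nonneg (α := ℝ) j]) h.le
    calc ((n : ℝ) + 1 + j) ^ (2*H-1) / ((x ^ p - y ^ p) ^ 2)
        ≤ (((n:ℝ) + 1) ^ (2*H-1) * (1 + (j:ℝ)) ^ m) /
            ((p * y ^ (2*H) * ((j:ℝ) + c)) ^ 2) := by
          apply div_le_div₀ (by positivity) hnum (by positivity)
          exact pow_le_pow_left₀ hdenpos.le hden 2
      _ = (((n:ℝ) + 1) ^ (2*H-1) / (p ^ 2 * (y ^ (2*H)) ^ 2)) *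
            ((1 + (j:ℝ)) ^ m / ((j:ℝ) + c) ^ 2) := by
          rw [mul_pow, mul_pow, div_mul_div_comm]
      _ ≤ ((32 / p ^ 2) * (n:ℝ) ^ (-2*H-1)) * ((1 + (j:ℝ)) ^ m / ((j:ℝ) + c) ^ 2) := by
          apply mul_le_mul_of_nonneg_right _ (by positivity)
          -- (n+1)^(2H-1) ≤ 2 n^(2H-1)
          have hnum2 : ((n:ℝ) + 1) ^ (2*H-1) ≤ 2 * (n:ℝ) ^ (2*H-1) := by
            rcases le_or_gt 0 (2*H - 1) with h | h
            · calc ((n:ℝ) + 1) ^ (2*H-1) ≤ (2 * n) ^ (2*H-1) :=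
                    Real.rpow_le_rpow (by positivity) (by linarith) h
                _ = 2 ^ (2*H-1) * (n:ℝ) ^ (2*H-1) :=
                    Real.mul_rpow (by norm_num) hn0.le
                _ ≤ 2 * (n:ℝ) ^ (2*H-1) := by
                    apply mul_le_mul_of_nonneg_right _ (Real.rpow_nonneg hn0.le _)
                    calc (2:ℝ) ^ (2*H-1) ≤ 2 ^ (1:ℝ) :=
                        Real.rpow_le_rpow_of_exponent_le one_le_two (by linarith)
                      _ = 2 := Real.rpow_one 2
            · calc ((n:ℝ) + 1) ^ (2*H-1) ≤ (n:ℝ) ^ (2*H-1) :=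
                    Real.rpow_le_rpow_of_nonpos hn0 (by linarith) h.le
                _ ≤ 2 * (n:ℝ) ^ (2*H-1) := by
                    nlinarith [Real.rpow_nonneg hn0.le (2*H-1)]
          -- y^(4H) ≥ n^(4H)/16
          have hyden : (n:ℝ) ^ (4*H) / 16 ≤ (y ^ (2*H)) ^ 2 := by
            have h1 : (y ^ (2*H)) ^ 2 = y ^ (4*H) := by
              rw [← Real.rpow_natCast (y ^ (2*H)) 2, ← Real.rpow_mul hy.le]
              norm_num; ring_nf
            rw [h1]
            calc (n:ℝ) ^ (4*H) / 16 = ((n:ℝ) ^ (4*H)) * (16:ℝ)⁻¹ := by ring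
              _ ≤ ((n:ℝ) ^ (4*H)) * (2:ℝ) ^ (-(4*H)) := by
                  apply mul_le_mul_of_nonneg_left _ (Real.rpow_nonneg hn0.le _)
                  rw [show ((16:ℝ)⁻¹) = 2 ^ (-(4:ℝ)) by
                    rw [show (-(4:ℝ)) = ((-4 : ℤ) : ℝ) by norm_num, Real.rpow_intCast]
                    norm_num]
                  exact Real.rpow_le_rpow_of_exponent_le one_le_two (by linarith)
              _ = ((n:ℝ) / 2) ^ (4*H) := by
                  rw [Real.div_rpow hn0.le (by norm_num), Real.rpow_neg (by norm_num),
                    div_eq_mul_inv]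
              _ ≤ y ^ (4*H) := Real.rpow_le_rpow (by positivity) hyn (by linarith)
          calc ((n:ℝ) + 1) ^ (2*H-1) / (p ^ 2 * (y ^ (2*H)) ^ 2)
              ≤ (2 * (n:ℝ) ^ (2*H-1)) / (p ^ 2 * ((n:ℝ) ^ (4*H) / 16)) := by
                apply div_le_div₀ (by positivity) hnum2 (by positivity)
                apply mul_le_mul_of_nonneg_left hyden (by positivity)
            _ = (32 / p ^ 2) * ((n:ℝ) ^ (2*H-1) / (n:ℝ) ^ (4*H)) := by
                ring
            _ = (32 / p ^ 2) * (n:ℝ) ^ (-2*H-1) := by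
                rw [← Real.rpow_sub hn0]; ring_nf
  -- summability of the original series
  have hterm_nonneg : ∀ j : ℕ, 0 ≤ ((n : ℝ) + 1 + j) ^ (2*H-1) /
      ((((n : ℝ) + 1 + j + b) ^ p - y ^ p) ^ 2) := by
    intro j
    have : (0:ℝ) < (n:ℝ) + 1 + j := by positivity
    positivity
  have hsum_f : Summable (fun j : ℕ => ((n : ℝ) + 1 + j) ^ (2*H-1) /
      ((((n : ℝ) + 1 + j + b) ^ p - y ^ p) ^ 2)) :=
    Summable.of_nonneg_of_le hterm_nonneg key ((hS.mul_left _))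
  have hts : (∑' j : ℕ, ((n : ℝ) + 1 + j) ^ (2*H-1) /
        ((((n : ℝ) + 1 + j + b) ^ p - y ^ p) ^ 2))
      ≤ ((32 / p ^ 2) * (n:ℝ) ^ (-2*H-1)) * S := by
    rw [hS_def, ← tsum_mul_left]
    exact Summable.tsum_le_tsum key hsum_f (hS.mul_left _)
  rw [Real.norm_eq_abs, Real.norm_eq_abs,
    abs_of_nonneg (tsum_nonneg hterm_nonneg),
    abs_of_nonneg (Real.rpow_nonneg hn0.le _)]
  calc (∑' j : ℕ, ((n : ℝ) + 1 + j) ^ (2*H-1) /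
        ((((n : ℝ) + 1 + j + b) ^ p - y ^ p) ^ 2))
      ≤ ((32 / p ^ 2) * (n:ℝ) ^ (-2*H-1)) * S := hts
    _ = (32 / p ^ 2) * S * (n:ℝ) ^ (-2*H-1) := by ring
end
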